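/- arXiv:2110.01231 — 9 statements merged into one kernel-verified Lean document; each statement's English description precedes it below -/
import Mathlib

section
/- Let K ≥ 1, let p : Fin K → ℝ^K be an affinely independent family of points, and let d : Fin K → ℝ. Then the trilateration solution set S = {y ∈ ℝ^K : ∀ i, dist(y, p i) = d i} contains at most two points; i.e., there exist points a, b ∈ ℝ^K such that S ⊆ {a, b}. -/
open EuclideanGeometry AffineSubspace

/-- Trilateration in ℝ^K from K affinely independent points determines at most
two candidate positions: the solution set is contained in a two-point set. -/
theorem trilateration_at_most_two (K : ℕ) (hK : 1 ≤ K)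
    (p : Fin K → EuclideanSpace ℝ (Fin K)) (hp : AffineIndependent ℝ p)
    (d : Fin K → ℝ) :
    ∃ a b : EuclideanSpace ℝ (Fin K),
      {y : EuclideanSpace ℝ (Fin K) | ∀ i, dist y (p i) = d i} ⊆ {a, b} := by
  classical
  by_cases hS : {y : EuclideanSpace ℝ (Fin K) | ∀ i, dist y (p i) = d i}.Nonempty
  swap
  · exact ⟨0, 0, fun y hy => absurd ⟨y, hy⟩ hS⟩
  obtain ⟨a, ha⟩ := hS
  set s : AffineSubspace ℝ (EuclideanSpace ℝ (Fin K)) := affineSpan ℝ (Set.range p) with hs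
  haveI : Nonempty s := ⟨⟨p ⟨0, hK⟩, subset_affineSpan ℝ _ (Set.mem_range_self _)⟩⟩
  refine ⟨a, EuclideanGeometry.reflection s a, ?_⟩
  intro y hy
  -- s is contained in the perpendicular bisector of y and a
  have hle : s ≤ AffineSubspace.perpBisector y a := by
    rw [hs, affineSpan_le]
    rintro _ ⟨i, rfl⟩
    rw [SetLike.mem_coe, AffineSubspace.mem_perpBisector_iff_dist_eq]
    rw [dist_comm (p i) y, dist_comm (p i) a, hy i, ha i]
  set m : EuclideanSpace ℝ (Fin K) := (orthogonalProjection s a : EuclideanSpace ℝ (Fin K))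
    with hm
  have hms : m ∈ s := orthogonalProjection_mem a
  -- y -ᵥ a is orthogonal to the direction of s
  have hva : y -ᵥ a ∈ s.directionᗮ := by
    rw [Submodule.mem_orthogonal]
    intro u hu
    have hu' : u ∈ (AffineSubspace.perpBisector y a).direction :=
      AffineSubspace.direction_le hle hu
    rw [AffineSubspace.direction_perpBisector] at hu'
    have := hu' (a -ᵥ y) (Submodule.mem_span_singleton_self _)
    have h2 : inner ℝ u (a -ᵥ y : EuclideanSpace ℝ (Fin K)) = (0 : ℝ) := by
      rwa [real_inner_comm] at this
    rw [← neg_vsub_eq_vsub_rev a y, inner_neg_right, h2, neg_zero]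
  have hw : y -ᵥ m ∈ s.directionᗮ := by
    have h1 : a -ᵥ m ∈ s.directionᗮ :=
      vsub_orthogonalProjection_mem_direction_orthogonal s a
    have := Submodule.add_mem s.directionᗮ hva h1
    rwa [vsub_add_vsub_cancel] at this
  have hw' : a -ᵥ m ∈ s.directionᗮ :=
    vsub_orthogonalProjection_mem_direction_orthogonal s a
  -- equal norms
  have hnorm : ‖(y -ᵥ m : EuclideanSpace ℝ (Fin K))‖ = ‖(a -ᵥ m : EuclideanSpace ℝ (Fin K))‖ := by
    have := (AffineSubspace.mem_perpBisector_iff_dist_eq).mp (hle hms)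
    rwa [dist_eq_norm_vsub (EuclideanSpace ℝ (Fin K)), dist_eq_norm_vsub (EuclideanSpace ℝ (Fin K)),
      ← neg_vsub_eq_vsub_rev y m, ← neg_vsub_eq_vsub_rev a m, norm_neg, norm_neg] at this
  -- the orthogonal complement is one-dimensional
  have hdim : Module.finrank ℝ s.directionᗮ = 1 := by
    have h1 : Module.finrank ℝ s.direction = K - 1 := by
      rw [hs, direction_affineSpan]
      exact hp.finrank_vectorSpan (by rw [Fintype.card_fin]; omega)
    have h2 := Submodule.finrank_add_finrank_orthogonal
      (K := s.direction) (E := EuclideanSpace ℝ (Fin K))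
    rw [h1, finrank_euclideanSpace_fin] at h2
    omega
  obtain ⟨v, hv0, hvspan⟩ := finrank_eq_one_iff'.mp hdim
  obtain ⟨c, hc⟩ := hvspan ⟨y -ᵥ m, hw⟩
  obtain ⟨c', hc'⟩ := hvspan ⟨a -ᵥ m, hw'⟩
  have hcy : (y -ᵥ m : EuclideanSpace ℝ (Fin K)) = c • (v : EuclideanSpace ℝ (Fin K)) := by
    have := congrArg (Subtype.val) hc; simpa using this.symm
  have hca : (a -ᵥ m : EuclideanSpace ℝ (Fin K)) = c' • (v : EuclideanSpace ℝ (Fin K)) := by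
    have := congrArg (Subtype.val) hc'; simpa using this.symm
  have hvne : (v : EuclideanSpace ℝ (Fin K)) ≠ 0 := by
    simpa [Submodule.coe_eq_zero] using hv0
  have habs : |c| = |c'| := by
    have := hnorm
    rw [hcy, hca, norm_smul, norm_smul] at this
    have hvpos : (0 : ℝ) < ‖(v : EuclideanSpace ℝ (Fin K))‖ := norm_pos_iff.mpr hvne
    have := mul_right_cancel₀ (ne_of_gt hvpos) this
    simpa [Real.norm_eq_abs] using this
  have hcc : c = c' ∨ c = -c' := abs_eq_abs.mp habs
  rcases hcc with h | h
  · left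
    have : (y -ᵥ m : EuclideanSpace ℝ (Fin K)) = a -ᵥ m := by rw [hcy, hca, h]
    exact vsub_left_cancel this
  · right
    have hym : (y -ᵥ m : EuclideanSpace ℝ (Fin K)) = -(a -ᵥ m) := by
      rw [hcy, hca, h, neg_smul]
    have : y = (m -ᵥ a) +ᵥ m := by
      rw [← neg_vsub_eq_vsub_rev a m, ← hym, vsub_vadd]
    rw [this, EuclideanGeometry.reflection_apply', ← hm]
    exact Set.mem_singleton _
end

section
/- Let K ≥ 1, let p : Fin K → ℝ^K be an affinely independent family of points, and let d : Fin K → ℝ. Suppose there exists y₀ ∈ ℝ^K with y₀ ∉ affineSpan ℝ (Set.range p) and dist(y₀, p i) = d i for all i. Then the trilateration solution set {y ∈ ℝ^K : ∀ i, dist(y, p i) = d i} equals the two-element set {y₀, r(y₀)}, where r is the reflection across affineSpan ℝ (Set.range p); in particular y₀ ≠ r(y₀), so the solution set has exactly two elements. -/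
set_option maxHeartbeats 1000000

open EuclideanGeometry Module
open scoped RealInnerProductSpace

/-- If trilateration from K affinely independent points in ℝ^K admits a solution
y₀ outside the affine span of the points, then the solution set is exactly the
two-element set consisting of y₀ and its reflection across that affine span. -/
theorem trilateration_exactly_two (K : ℕ) (hK : 1 ≤ K)
    (p : Fin K → EuclideanSpace ℝ (Fin K)) (hp : AffineIndependent ℝ p)
    (d : Fin K → ℝ)
    [Nonempty (affineSpan ℝ (Set.range p))]
    (y₀ : EuclideanSpace ℝ (Fin K)) (hy₀ : y₀ ∉ affineSpan ℝ (Set.range p))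
    (hd : ∀ i, dist y₀ (p i) = d i) :
    {y : EuclideanSpace ℝ (Fin K) | ∀ i, dist y (p i) = d i}
      = {y₀, EuclideanGeometry.reflection (affineSpan ℝ (Set.range p)) y₀} ∧
    y₀ ≠ EuclideanGeometry.reflection (affineSpan ℝ (Set.range p)) y₀ := by
  have i₀ : Fin K := ⟨0, hK⟩
  set s := affineSpan ℝ (Set.range p) with hs
  set W := s.direction with hW
  -- dimension facts
  have hWfin : finrank ℝ W = K - 1 := by
    rw [hW, hs, direction_affineSpan]
    exact hp.finrank_vectorSpan (by rw [Fintype.card_fin]; omega)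
  have hE : finrank ℝ (EuclideanSpace ℝ (Fin K)) = K := finrank_euclideanSpace_fin
  have hWperp : finrank ℝ (Wᗮ : Submodule ℝ (EuclideanSpace ℝ (Fin K))) = 1 := by
    have := Submodule.finrank_add_finrank_orthogonal (K := W)
    omega
  set q : EuclideanSpace ℝ (Fin K) := (EuclideanGeometry.orthogonalProjection s y₀ : EuclideanSpace ℝ (Fin K)) with hq
  have hqmem : q ∈ s := (EuclideanGeometry.orthogonalProjection s y₀).2
  set w : EuclideanSpace ℝ (Fin K) := y₀ -ᵥ q with hwdef
  have hwW : w ∈ Wᗮ := EuclideanGeometry.vsub_orthogonalProjection_mem_direction_orthogonal s y₀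
  have hwne : w ≠ 0 := by
    rw [hwdef, vsub_ne_zero]
    intro h
    exact hy₀ (h ▸ hqmem)
  have hrefl : EuclideanGeometry.reflection s y₀ = (-2 : ℝ) • w +ᵥ y₀ := by
    rw [EuclideanGeometry.reflection_apply', hwdef]
    simp only [vsub_eq_sub, vadd_eq_add, ← hq]
    module
  have hperp_mem : ∀ y : EuclideanSpace ℝ (Fin K), (∀ i, dist y (p i) = d i) → y -ᵥ y₀ ∈ Wᗮ := by
    intro y hy
    rw [Submodule.mem_orthogonal]
    intro u hu
    rw [hW, hs, direction_affineSpan] at hu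
    induction hu using Submodule.span_induction with
    | mem v hv =>
        obtain ⟨a, ⟨i, rfl⟩, b, ⟨j, rfl⟩, rfl⟩ := hv
        exact EuclideanGeometry.inner_vsub_vsub_of_dist_eq_of_dist_eq
          (((hd j).trans (hy j).symm)) (((hd i).trans (hy i).symm))
    | zero => simp
    | add _ _ _ _ h1 h2 => rw [inner_add_left, h1, h2, add_zero]
    | smul c _ _ h1 => rw [inner_smul_left, h1, mul_zero]
  constructor
  · ext y
    simp only [Set.mem_setOf_eq, Set.mem_insert_iff, Set.mem_singleton_iff]
    constructor
    · intro hy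
      obtain ⟨c, hc⟩ := (finrank_eq_one_iff_of_nonzero' (⟨w, hwW⟩ : Wᗮ)
        (by simpa using hwne)).mp hWperp ⟨y -ᵥ y₀, hperp_mem y hy⟩
      have hcw : c • w = y -ᵥ y₀ := by
        have := congrArg (Subtype.val) hc
        simpa using this
      have hc' : y = c • w +ᵥ y₀ := by rw [hcw]; simp
      have hu : q -ᵥ p i₀ ∈ W := AffineSubspace.vsub_mem_direction hqmem
        (mem_affineSpan ℝ (Set.mem_range_self i₀))
      have hinner : ⟪w, q -ᵥ p i₀⟫ = 0 := by
        rw [real_inner_comm]; exact (Submodule.mem_orthogonal W w).mp hwW _ hu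
      have hy0 : y₀ -ᵥ p i₀ = w + (q -ᵥ p i₀) := by
        simp only [hwdef, vsub_eq_sub]; abel
      have hyi : y -ᵥ p i₀ = (c + 1) • w + (q -ᵥ p i₀) := by
        simp only [hc', vadd_eq_add, vsub_eq_sub, add_smul, one_smul]
        simp only [hwdef, vsub_eq_sub]
        module
      have hnorm : dist y (p i₀) = dist y₀ (p i₀) := (hy i₀).trans (hd i₀).symm
      rw [dist_eq_norm_vsub (EuclideanSpace ℝ (Fin K)),
        dist_eq_norm_vsub (EuclideanSpace ℝ (Fin K)), hyi, hy0] at hnorm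
      have hsq := congrArg (· ^ 2) hnorm
      rw [norm_add_sq_real, norm_add_sq_real, real_inner_smul_left, hinner, norm_smul,
        Real.norm_eq_abs] at hsq
      have hw2 : (0:ℝ) < ‖w‖ ^ 2 := pow_pos (norm_pos_iff.mpr hwne) 2
      have hcc : (c + 1) ^ 2 = 1 := by
        rw [mul_pow, sq_abs] at hsq
        have h1 : (c + 1) ^ 2 * ‖w‖ ^ 2 = 1 * ‖w‖ ^ 2 := by linarith
        exact mul_right_cancel₀ (ne_of_gt hw2) h1
      have hcases : c = 0 ∨ c = -2 := by
        have h2 : (c + 1 - 1) * (c + 1 + 1) = 0 := by linear_combination hcc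
        rcases mul_eq_zero.mp h2 with h | h
        · left; linarith
        · right; linarith
      rcases hcases with rfl | rfl
      · left; rw [hc']; simp
      · right; rw [hc', hrefl]
    · rintro (rfl | rfl)
      · exact hd
      · intro i
        rw [dist_comm, EuclideanGeometry.dist_reflection_eq_of_mem s
          (mem_affineSpan ℝ (Set.mem_range_self i)), dist_comm]
        exact hd i
  · intro h
    exact hy₀ ((EuclideanGeometry.reflection_eq_self_iff y₀).mp h.symm)
end

section
/- (Core of Proposition 3.2: congruent point sets admit the same number of trilateration extensions.) Let K ≥ 1, let p, q : Fin K → ℝ^K be two families of points with p affinely independent and dist(p i, p j) = dist(q i, q j) for all i, j, and let d : Fin K → ℝ. Suppose there exists y₀ ∈ ℝ^K with y₀ ∉ affineSpan ℝ (Set.range p) and dist(y₀, p i) = d i for all i. Then the set {z ∈ ℝ^K : ∀ i, dist(z, q i) = d i} has exactly two elements. -/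
open Module Set
open scoped RealInnerProductSpace

private lemma aux_inner_dist {F : Type*} [NormedAddCommGroup F] [InnerProductSpace ℝ F]
    (a b c : F) :
    ⟪a - c, b - c⟫ = (dist a c ^ 2 + dist b c ^ 2 - dist a b ^ 2) / 2 := by
  have h := norm_sub_sq_real (a - c) (b - c)
  have h2 : (a - c) - (b - c) = a - b := by abel
  rw [h2] at h
  simp only [dist_eq_norm]
  linarith

private lemma aux_two_solutions (K : ℕ) (hK : 1 ≤ K)
    (p : Fin K → EuclideanSpace ℝ (Fin K)) (hp : AffineIndependent ℝ p)
    (d : Fin K → ℝ)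
    (y₀ : EuclideanSpace ℝ (Fin K)) (hy₀ : y₀ ∉ affineSpan ℝ (Set.range p))
    (hd : ∀ i, dist y₀ (p i) = d i) :
    {z : EuclideanSpace ℝ (Fin K) | ∀ i, dist z (p i) = d i}.encard = 2 := by
  set i0 : Fin K := ⟨0, hK⟩ with hi0
  have hv : LinearIndependent ℝ (fun i : {x : Fin K // x ≠ i0} => p i - p i0) := by
    have := (affineIndependent_iff_linearIndependent_vsub ℝ p i0).mp hp
    simpa [vsub_eq_sub] using this
  set S : Submodule ℝ (EuclideanSpace ℝ (Fin K)) :=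
    Submodule.span ℝ (Set.range fun i : {x : Fin K // x ≠ i0} => p i - p i0) with hSdef
  haveI : CompleteSpace S := FiniteDimensional.complete ℝ S
  have hS : finrank ℝ S = K - 1 := by
    rw [hSdef, finrank_span_eq_card hv]
    simp [Fintype.card_subtype_compl]
  set m : EuclideanSpace ℝ (Fin K) :=
    (y₀ - p i0) - (S.orthogonalProjectionOnto (y₀ - p i0) : EuclideanSpace ℝ (Fin K)) with hmdef
  have hmS : m ∈ Sᗮ := S.sub_starProjection_mem_orthogonal _
  have hSdir : S = (affineSpan ℝ (Set.range p)).direction := by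
    rw [direction_affineSpan, vectorSpan_range_eq_span_range_vsub_right_ne ℝ p i0]
    simp [hSdef, vsub_eq_sub]
  have hm0 : m ≠ 0 := by
    intro h
    apply hy₀
    have hmem : y₀ - p i0 ∈ S := by
      rw [sub_eq_zero.mp h]; exact SetLike.coe_mem _
    have := AffineSubspace.vadd_mem_of_mem_direction (hSdir ▸ hmem)
      (mem_affineSpan ℝ (Set.mem_range_self i0))
    simpa [vadd_eq_add, sub_add_cancel] using this
  -- inner product facts
  have horthm : ∀ w ∈ S, ⟪w, m⟫ = 0 := fun w hw => (Submodule.mem_orthogonal S m).mp hmS w hw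
  have hvm : ∀ i : Fin K, ⟪p i - p i0, m⟫ = 0 := by
    intro i
    by_cases h : i = i0
    · simp [h]
    · exact horthm _ (Submodule.subset_span ⟨⟨i, h⟩, rfl⟩)
  have hym : ⟪y₀ - p i0, m⟫ = ‖m‖ ^ 2 := by
    have hdecomp : y₀ - p i0 = (S.orthogonalProjectionOnto (y₀ - p i0) : EuclideanSpace ℝ (Fin K)) + m := by
      rw [hmdef]; abel
    rw [hdecomp, inner_add_left, horthm _ (SetLike.coe_mem _), zero_add,
      real_inner_self_eq_norm_sq]
  have hyim : ∀ i : Fin K, ⟪y₀ - p i, m⟫ = ‖m‖ ^ 2 := by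
    intro i
    have h : y₀ - p i = (y₀ - p i0) - (p i - p i0) := by abel
    rw [h, inner_sub_left, hvm, hym, sub_zero]
  -- Sᗮ is spanned by m
  have hdim : finrank ℝ (Sᗮ : Submodule ℝ (EuclideanSpace ℝ (Fin K))) = 1 := by
    have h2 := Submodule.finrank_add_finrank_orthogonal S
    have hE : finrank ℝ (EuclideanSpace ℝ (Fin K)) = K := finrank_euclideanSpace_fin
    omega
  have hspanm : Submodule.span ℝ {m} = Sᗮ := by
    apply Submodule.eq_of_le_of_finrank_le
      (Submodule.span_le.mpr (Set.singleton_subset_iff.mpr hmS))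
    rw [hdim, finrank_span_singleton hm0]
  have hd0 : ∀ i, 0 ≤ d i := fun i => (hd i) ▸ dist_nonneg
  have hm2 : (0:ℝ) < ‖m‖ ^ 2 := pow_pos (norm_pos_iff.mpr hm0) 2
  -- the set equality
  have hset : {z : EuclideanSpace ℝ (Fin K) | ∀ i, dist z (p i) = d i}
      = {y₀, y₀ - (2:ℝ) • m} := by
    ext z
    simp only [Set.mem_setOf_eq, Set.mem_insert_iff, Set.mem_singleton_iff]
    constructor
    · intro hz
      have key : ∀ i, 2 * ⟪y₀ - p i, z - y₀⟫ + ‖z - y₀‖ ^ 2 = 0 := by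
        intro i
        have h1 : ‖z - p i‖ ^ 2 = ‖y₀ - p i‖ ^ 2 := by
          rw [← dist_eq_norm, ← dist_eq_norm, hz, hd]
        have h2 : z - p i = (y₀ - p i) + (z - y₀) := by abel
        rw [h2, norm_add_sq_real] at h1
        linarith
      have horth : z - y₀ ∈ Sᗮ := by
        rw [Submodule.mem_orthogonal]
        intro w hw
        induction hw using Submodule.span_induction with
        | mem w hw =>
          obtain ⟨i, rfl⟩ := hw
          show ⟪p (i:Fin K) - p i0, z - y₀⟫ = 0
          have h3 : (p (i:Fin K)) - p i0 = (y₀ - p i0) - (y₀ - p (i:Fin K)) := by abel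
          rw [h3, inner_sub_left]
          linarith [key (i : Fin K), key i0]
        | zero => simp
        | add x y hx hy ihx ihy => rw [inner_add_left, ihx, ihy, add_zero]
        | smul c x hx ihx => rw [inner_smul_left, ihx, mul_zero]
      have hmem2 : z - y₀ ∈ Submodule.span ℝ ({m} : Set (EuclideanSpace ℝ (Fin K))) :=
        hspanm ▸ horth
      obtain ⟨t, ht⟩ := Submodule.mem_span_singleton.mp hmem2
      have h4 : ⟪y₀ - p i0, z - y₀⟫ = t * ‖m‖ ^ 2 := by
        rw [← ht, real_inner_smul_right, hym]
      have h5 : ‖z - y₀‖ ^ 2 = t ^ 2 * ‖m‖ ^ 2 := by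
        rw [← ht, norm_smul]
        simp [mul_pow, sq_abs]
      have hk := key i0
      rw [h4, h5] at hk
      have h6 : t * (t + 2) * ‖m‖ ^ 2 = 0 := by ring_nf; ring_nf at hk; linarith
      have h7 : t * (t + 2) = 0 := by
        rcases mul_eq_zero.mp h6 with h | h
        · exact h
        · exact absurd h (ne_of_gt hm2)
      rcases mul_eq_zero.mp h7 with h | h
      · left
        have : z - y₀ = 0 := by rw [← ht, h, zero_smul]
        exact sub_eq_zero.mp this
      · right
        have ht2 : t = -2 := by linarith
        have : z = y₀ + t • m := by rw [ht]; abel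
        rw [this, ht2]
        module
    · rintro (rfl | rfl)
      · exact hd
      · intro i
        have h1 : ‖y₀ - (2:ℝ) • m - p i‖ ^ 2 = d i ^ 2 := by
          rw [sub_right_comm, norm_sub_sq_real, real_inner_smul_right, norm_smul]
          have hnd : ‖y₀ - p i‖ = d i := by rw [← dist_eq_norm, hd]
          rw [hnd, hyim]
          simp [mul_pow]
          ring
        rw [dist_eq_norm]
        exact (sq_eq_sq₀ (norm_nonneg _) (hd0 i)).mp h1
  rw [hset]
  refine Set.encard_pair ?_
  intro h
  apply hm0
  have h2 : (2:ℝ) • m = 0 := by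
    have := sub_eq_self.mp h.symm
    exact this
  simpa using h2

set_option maxHeartbeats 1000000 in
private lemma aux_isometry (K : ℕ) (hK : 1 ≤ K)
    (p q : Fin K → EuclideanSpace ℝ (Fin K)) (hp : AffineIndependent ℝ p)
    (hpq : ∀ i j, dist (p i) (p j) = dist (q i) (q j)) :
    ∃ Φ : EuclideanSpace ℝ (Fin K) → EuclideanSpace ℝ (Fin K),
      Function.Surjective Φ ∧ (∀ x y, dist (Φ x) (Φ y) = dist x y) ∧ ∀ i, Φ (p i) = q i := by
  set i0 : Fin K := ⟨0, hK⟩ with hi0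
  have hv : LinearIndependent ℝ (fun i : {x : Fin K // x ≠ i0} => p i - p i0) := by
    have := (affineIndependent_iff_linearIndependent_vsub ℝ p i0).mp hp
    simpa [vsub_eq_sub] using this
  set S : Submodule ℝ (EuclideanSpace ℝ (Fin K)) :=
    Submodule.span ℝ (Set.range fun i : {x : Fin K // x ≠ i0} => p i - p i0) with hSdef
  -- Gram matrices agree
  have hgram : ∀ i j : Fin K, ⟪p i - p i0, p j - p i0⟫ = ⟪q i - q i0, q j - q i0⟫ := by
    intro i j
    rw [aux_inner_dist, aux_inner_dist, hpq, hpq, hpq]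
  -- linear isometry on S sending p i - p i0 to q i - q i0
  set b : Basis {x : Fin K // x ≠ i0} ℝ S := Basis.span hv with hbdef
  have hbcoe : ∀ i : {x : Fin K // x ≠ i0}, (b i : EuclideanSpace ℝ (Fin K)) = p i - p i0 :=
    fun i => congrArg Subtype.val (Basis.span_apply hv i)
  set T0 : S →ₗ[ℝ] EuclideanSpace ℝ (Fin K) :=
    b.constr ℝ (fun i : {x : Fin K // x ≠ i0} => q i - q i0) with hT0def
  have hT0b : ∀ i : {x : Fin K // x ≠ i0}, T0 (b i) = q i - q i0 :=
    fun i => b.constr_basis ℝ _ i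
  have hT0inner : ∀ x y : S, ⟪T0 x, T0 y⟫ = ⟪(x : EuclideanSpace ℝ (Fin K)), y⟫ := by
    intro x y
    have hx := b.sum_repr x
    have hy := b.sum_repr y
    rw [← hx, ← hy]
    simp only [map_sum, map_smul, Submodule.coe_sum, SetLike.val_smul, sum_inner, inner_sum,
      real_inner_smul_left, real_inner_smul_right, hT0b, hbcoe]
    refine Finset.sum_congr rfl fun i _ => Finset.sum_congr rfl fun j _ => ?_
    rw [hgram]
  have hTnorm : ∀ x : S, ‖T0 x‖ = ‖x‖ := by
    intro x
    have h := hT0inner x x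
    rw [real_inner_self_eq_norm_sq, real_inner_self_eq_norm_sq] at h
    exact (sq_eq_sq₀ (norm_nonneg _) (norm_nonneg _)).mp h
  set T : S →ₗᵢ[ℝ] EuclideanSpace ℝ (Fin K) := ⟨T0, hTnorm⟩ with hTdef
  have hText : ∀ s : S, T.extend s = T0 s := fun s => T.extend_apply s
  set L : EuclideanSpace ℝ (Fin K) →ₗᵢ[ℝ] EuclideanSpace ℝ (Fin K) := T.extend with hLdef
  have hLp : ∀ i : Fin K, L (p i - p i0) = q i - q i0 := by
    intro i
    have hmemS : p i - p i0 ∈ S := by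
      by_cases h : i = i0
      · simp [h]
      · exact Submodule.subset_span ⟨⟨i, h⟩, rfl⟩
    have h1 : L (p i - p i0) = T0 ⟨p i - p i0, hmemS⟩ := hText ⟨p i - p i0, hmemS⟩
    have h3 : T0 ⟨p i - p i0, hmemS⟩ = q i - q i0 := by
      by_cases h : i = i0
      · have hz : (⟨p i - p i0, hmemS⟩ : S) = 0 := by
          apply Subtype.ext; simp [h]
        rw [hz, map_zero, h, sub_self]
      · have h2 : (⟨p i - p i0, hmemS⟩ : S) = b ⟨i, h⟩ := by
          apply Subtype.ext
          rw [hbcoe]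
        rw [h2]
        exact hT0b ⟨i, h⟩
    rw [h1, h3]
  have hLsurj : Function.Surjective L :=
    LinearMap.surjective_of_injective (f := L.toLinearMap) L.injective
  have hLnorm : ∀ x, ‖L x‖ = ‖x‖ := L.norm_map
  have hLsub : ∀ x y, L (x - y) = L x - L y := map_sub L.toLinearMap
  clear_value L
  refine ⟨fun x => L (x - p i0) + q i0, ?_, ?_, ?_⟩
  · intro z
    obtain ⟨x0, hx0⟩ := hLsurj (z - q i0)
    refine ⟨x0 + p i0, ?_⟩
    show L (x0 + p i0 - p i0) + q i0 = z
    rw [add_sub_cancel_right, hx0]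
    abel
  · intro x y
    show dist (L (x - p i0) + q i0) (L (y - p i0) + q i0) = dist x y
    rw [dist_eq_norm, dist_eq_norm]
    have h2 : (x - p i0) - (y - p i0) = x - y := by abel
    have h3 := hLsub (x - p i0) (y - p i0)
    rw [h2] at h3
    have h1 : (L (x - p i0) + q i0) - (L (y - p i0) + q i0) = L (x - y) := by
      rw [h3]; abel
    rw [h1, hLnorm]
  · intro i
    show L (p i - p i0) + q i0 = q i
    rw [hLp]
    abel

/-- If a family p of K affinely independent points in ℝ^K admits a trilateration
solution y₀ outside its affine span, then for any family q congruent to p (same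
pairwise distances), the trilateration solution set for q has exactly two
elements. -/
theorem trilateration_congruent_two (K : ℕ) (hK : 1 ≤ K)
    (p q : Fin K → EuclideanSpace ℝ (Fin K)) (hp : AffineIndependent ℝ p)
    (hpq : ∀ i j, dist (p i) (p j) = dist (q i) (q j))
    (d : Fin K → ℝ)
    (y₀ : EuclideanSpace ℝ (Fin K)) (hy₀ : y₀ ∉ affineSpan ℝ (Set.range p))
    (hd : ∀ i, dist y₀ (p i) = d i) :
    {z : EuclideanSpace ℝ (Fin K) | ∀ i, dist z (q i) = d i}.encard = 2 := by
  obtain ⟨Φ, hΦsurj, hΦdist, hΦp⟩ := aux_isometry K hK p q hp hpq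
  have hΦinj : Function.Injective Φ := by
    intro x y h
    have := hΦdist x y
    rw [h, dist_self] at this
    exact dist_eq_zero.mp this.symm
  have hsetq : {z : EuclideanSpace ℝ (Fin K) | ∀ i, dist z (q i) = d i}
      = Φ '' {z : EuclideanSpace ℝ (Fin K) | ∀ i, dist z (p i) = d i} := by
    ext z
    simp only [Set.mem_setOf_eq, Set.mem_image]
    constructor
    · intro hz
      obtain ⟨x, rfl⟩ := hΦsurj z
      exact ⟨x, fun i => by rw [← hΦdist x (p i), hΦp i]; exact hz i, rfl⟩
    · rintro ⟨x, hx, rfl⟩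
      intro i
      rw [← hΦp i, hΦdist]
      exact hx i
  rw [hsetq, Set.InjOn.encard_image (hΦinj.injOn)]
  exact aux_two_solutions K hK p hp d y₀ hy₀ hd
end

section
/- (Corollary 3.4, clique form.) Let K ≥ 1 and let c : Fin K → Fin K → ℝ (clique distances) and d : Fin K → ℝ be given. Suppose there exists an affinely independent family p : Fin K → ℝ^K with dist(p i, p j) = c i j for all i, j, together with a point y₀ ∉ affineSpan ℝ (Set.range p) satisfying dist(y₀, p i) = d i for all i. Then for EVERY affinely independent family q : Fin K → ℝ^K with dist(q i, q j) = c i j for all i, j, the set {z ∈ ℝ^K : ∀ i, dist(z, q i) = d i} has exactly two elements. -/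
open EuclideanGeometry Module
set_option synthInstance.maxHeartbeats 1000000
set_option maxHeartbeats 1000000

section aux

variable {K : ℕ}

/-- In a rank-one submodule, two elements of equal norm are equal or negatives. -/
lemma aux_rank_one_norm_eq {V : Type*} [NormedAddCommGroup V] [InnerProductSpace ℝ V]
    {W : Submodule ℝ V} (hW : finrank ℝ W = 1) {v₁ v₂ : V}
    (h₁ : v₁ ∈ W) (h₂ : v₂ ∈ W) (h : ‖v₁‖ = ‖v₂‖) : v₂ = v₁ ∨ v₂ = -v₁ := by
  obtain ⟨u, hu0, hu⟩ := finrank_eq_one_iff'.mp hW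
  obtain ⟨t₁, ht₁⟩ := hu ⟨v₁, h₁⟩
  obtain ⟨t₂, ht₂⟩ := hu ⟨v₂, h₂⟩
  have hv₁ : v₁ = t₁ • (u : V) := by
    have := congrArg (Subtype.val) ht₁; simpa using this.symm
  have hv₂ : v₂ = t₂ • (u : V) := by
    have := congrArg (Subtype.val) ht₂; simpa using this.symm
  have hun : ‖(u : V)‖ ≠ 0 := by
    simp only [norm_ne_zero_iff]
    intro hc
    exact hu0 (Subtype.ext hc)
  have habs : |t₁| = |t₂| := by
    rw [hv₁, hv₂, norm_smul, norm_smul] at h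
    have := mul_right_cancel₀ hun h
    simpa using this
  rcases abs_eq_abs.mp habs.symm with h' | h'
  · left; rw [hv₁, hv₂, h']
  · right; rw [hv₁, hv₂, h', neg_smul]

end aux

section main

variable {K : ℕ}

local notation "E" K => EuclideanSpace ℝ (Fin K)

lemma aux_perp_rank (hK : 1 ≤ K) {q : Fin K → E K} (hq : AffineIndependent ℝ q) :
    finrank ℝ ((affineSpan ℝ (Set.range q)).directionᗮ : Submodule ℝ (E K)) = 1 := by
  have h1 : finrank ℝ (vectorSpan ℝ (Set.range q)) = K - 1 := by
    apply hq.finrank_vectorSpan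
    simp only [Fintype.card_fin]
    omega
  apply Submodule.finrank_add_finrank_orthogonal'
  rw [direction_affineSpan, h1, finrank_euclideanSpace_fin]
  omega

lemma aux_mem_perp {q : Fin K → E K} {z₁ z₂ : E K}
    (h : ∀ i, dist z₁ (q i) = dist z₂ (q i)) :
    z₂ -ᵥ z₁ ∈ (affineSpan ℝ (Set.range q)).directionᗮ := by
  rw [direction_affineSpan]
  rw [Submodule.mem_orthogonal]
  intro u hu
  have hgen : ∀ x ∈ Set.range q -ᵥ Set.range q,
      (inner ℝ x (z₂ -ᵥ z₁) : ℝ) = 0 := by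
    rintro x ⟨a, ⟨i, rfl⟩, b, ⟨j, rfl⟩, rfl⟩
    exact EuclideanGeometry.inner_vsub_vsub_of_dist_eq_of_dist_eq (h j) (h i)
  rw [vectorSpan_def] at hu
  induction hu using Submodule.span_induction with
  | mem x hx => exact hgen x hx
  | zero => simp
  | add x y _ _ hx hy => rw [inner_add_left, hx, hy, add_zero]
  | smul t x _ hx => rw [real_inner_smul_left, hx, mul_zero]


lemma aux_structure (hK : 1 ≤ K) {q : Fin K → E K} (hq : AffineIndependent ℝ q)
    [Nonempty ↥(affineSpan ℝ (Set.range q))]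
    {z₁ z₂ : E K} (h : ∀ i, dist z₁ (q i) = dist z₂ (q i)) :
    z₂ = z₁ ∨ z₂ = EuclideanGeometry.reflection (affineSpan ℝ (Set.range q)) z₁ := by
  haveI : Nonempty (Fin K) := ⟨⟨0, hK⟩⟩
  set i0 : Fin K := ⟨0, hK⟩ with hi0
  set s : AffineSubspace ℝ (E K) := affineSpan ℝ (Set.range q) with hs
  set m : E K := ↑(orthogonalProjection s z₁) with hm
  have hperp : z₂ -ᵥ z₁ ∈ s.directionᗮ := aux_mem_perp h
  have hv₁ : z₁ -ᵥ m ∈ s.directionᗮ :=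
    EuclideanGeometry.vsub_orthogonalProjection_mem_direction_orthogonal s z₁
  have hm₂ : (orthogonalProjection s z₂ : E K) = m := by
    have hmem : m ∈ (s : Set (E K)) ∩ AffineSubspace.mk' z₂ s.directionᗮ := by
      constructor
      · exact EuclideanGeometry.orthogonalProjection_mem z₁
      · have : m -ᵥ z₂ ∈ s.directionᗮ := by
          have : m -ᵥ z₂ = -(z₂ -ᵥ z₁) + -(z₁ -ᵥ m) := by
            simp only [vsub_eq_sub]
            abel
          rw [this]
          exact Submodule.add_mem _ (Submodule.neg_mem _ hperp) (Submodule.neg_mem _ hv₁)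
        have := AffineSubspace.vadd_mem_mk' z₂ this
        rwa [vsub_vadd] at this
    rw [EuclideanGeometry.inter_eq_singleton_orthogonalProjection z₂] at hmem
    exact (Set.mem_singleton_iff.mp hmem).symm
  have hv₂ : z₂ -ᵥ m ∈ s.directionᗮ := by
    have := EuclideanGeometry.vsub_orthogonalProjection_mem_direction_orthogonal s z₂
    rwa [hm₂] at this
  have hq0 : q i0 ∈ s := mem_affineSpan ℝ (Set.mem_range_self _)
  have P₁ := EuclideanGeometry.dist_sq_eq_dist_orthogonalProjection_sq_add_dist_orthogonalProjection_sq z₁ hq0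
  have P₂ := EuclideanGeometry.dist_sq_eq_dist_orthogonalProjection_sq_add_dist_orthogonalProjection_sq z₂ hq0
  rw [hm₂] at P₂
  rw [← hm] at P₁
  have hdd : dist (q i0) z₁ = dist (q i0) z₂ := by
    rw [dist_comm (q i0) z₁, dist_comm (q i0) z₂]; exact h i0
  have hsq : dist z₁ m * dist z₁ m = dist z₂ m * dist z₂ m := by
    rw [hdd] at P₁
    nlinarith [P₁, P₂]
  have hnorm : ‖z₁ -ᵥ m‖ = ‖z₂ -ᵥ m‖ := by
    rw [← dist_eq_norm_vsub, ← dist_eq_norm_vsub]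
    rcases mul_self_eq_mul_self_iff.mp hsq with h' | h'
    · exact h'
    · have h1 : (0:ℝ) ≤ dist z₁ m := dist_nonneg
      have h2 : (0:ℝ) ≤ dist z₂ m := dist_nonneg
      linarith
  rcases aux_rank_one_norm_eq (aux_perp_rank hK hq) hv₁ hv₂ hnorm with h' | h'
  · left
    have : z₂ -ᵥ m = z₁ -ᵥ m := h'
    exact vsub_left_cancel this
  · right
    rw [EuclideanGeometry.reflection_apply', ← hm, ← hm₂]
    rw [hm₂]
    have : z₂ = (z₂ -ᵥ m) +ᵥ m := (vsub_vadd _ _).symm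
    rw [this, h', neg_vsub_eq_vsub_rev]

lemma aux_exists (hK : 1 ≤ K) {c : Fin K → Fin K → ℝ} {d : Fin K → ℝ}
    {p : Fin K → E K} (hpc : ∀ i j, dist (p i) (p j) = c i j)
    {y₀ : E K} (hy₀ : y₀ ∉ affineSpan ℝ (Set.range p))
    (hd : ∀ i, dist y₀ (p i) = d i)
    {q : Fin K → E K} (hq : AffineIndependent ℝ q)
    (hqc : ∀ i j, dist (q i) (q j) = c i j)
    [Nonempty ↥(affineSpan ℝ (Set.range p))]
    [Nonempty ↥(affineSpan ℝ (Set.range q))] :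
    ∃ z : E K, (∀ i, dist z (q i) = d i) ∧ z ∉ affineSpan ℝ (Set.range q) := by
  set sp : AffineSubspace ℝ (E K) := affineSpan ℝ (Set.range p) with hsp
  set sq : AffineSubspace ℝ (E K) := affineSpan ℝ (Set.range q) with hsq
  set m : E K := ↑(orthogonalProjection sp y₀) with hm
  have hmmem : m ∈ sp := EuclideanGeometry.orthogonalProjection_mem y₀
  obtain ⟨w, hw, hmw⟩ := eq_affineCombination_of_mem_affineSpan_of_fintype hmmem
  set m' : E K := Finset.univ.affineCombination ℝ q w with hm'
  have hm'mem : m' ∈ sq := affineCombination_mem_affineSpan hw q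
  -- distance transfer
  have hdist : ∀ i, dist m' (q i) = dist m (p i) := by
    intro i
    have hsw : ∑ j, Finset.affineCombinationSingleWeights ℝ i j = 1 :=
      Finset.sum_affineCombinationSingleWeights ℝ _ (Finset.mem_univ i)
    have hqi : q i = Finset.univ.affineCombination ℝ q
        (Finset.affineCombinationSingleWeights ℝ i) :=
      (Finset.univ.affineCombination_affineCombinationSingleWeights ℝ q (Finset.mem_univ i)).symm
    have hpi : p i = Finset.univ.affineCombination ℝ p
        (Finset.affineCombinationSingleWeights ℝ i) :=
      (Finset.univ.affineCombination_affineCombinationSingleWeights ℝ p (Finset.mem_univ i)).symm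
    have hq' := EuclideanGeometry.dist_affineCombination q hw hsw
    have hp' := EuclideanGeometry.dist_affineCombination p hw hsw
    have hceq : ∀ a b : Fin K, dist (q a) (q b) = dist (p a) (p b) := by
      intro a b; rw [hqc a b, hpc a b]
    simp only [hceq] at hq'
    rw [hmw, hqi, hpi]
    have hqq : dist (Finset.univ.affineCombination ℝ q w)
        (Finset.univ.affineCombination ℝ q (Finset.affineCombinationSingleWeights ℝ i)) =
        dist (Finset.univ.affineCombination ℝ p w)
        (Finset.univ.affineCombination ℝ p (Finset.affineCombinationSingleWeights ℝ i)) := by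
      have := hq'.trans hp'.symm
      nlinarith [dist_nonneg (x := Finset.univ.affineCombination ℝ q w)
          (y := Finset.univ.affineCombination ℝ q (Finset.affineCombinationSingleWeights ℝ i)),
        dist_nonneg (x := Finset.univ.affineCombination ℝ p w)
          (y := Finset.univ.affineCombination ℝ p (Finset.affineCombinationSingleWeights ℝ i))]
    exact hqq
  -- the height
  set t : ℝ := dist y₀ m with htd
  have ht : 0 < t := by
    have := EuclideanGeometry.dist_orthogonalProjection_ne_zero_of_notMem (s := sp) hy₀
    rw [← hm] at this
    exact lt_of_le_of_ne dist_nonneg (Ne.symm this)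
  -- a normal vector of norm t
  obtain ⟨u, hu0, -⟩ := finrank_eq_one_iff'.mp (aux_perp_rank hK hq)
  have hun : ‖(u : E K)‖ ≠ 0 := by
    simp only [norm_ne_zero_iff]
    intro hc; exact hu0 (Subtype.ext hc)
  set uv : E K := (t / ‖(u : E K)‖) • (u : E K) with huv
  have huvmem : uv ∈ sq.directionᗮ := Submodule.smul_mem _ _ u.2
  have huvnorm : ‖uv‖ = t := by
    rw [huv, norm_smul, Real.norm_eq_abs, abs_div, abs_of_pos ht, abs_of_nonneg (norm_nonneg _)]
    field_simp
  refine ⟨uv +ᵥ m', ?_, ?_⟩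
  · intro i
    have hproj : (orthogonalProjection sq (uv +ᵥ m') : E K) = m' := by
      rw [EuclideanGeometry.orthogonalProjection_vadd_eq_self hm'mem huvmem]
    have hqi : q i ∈ sq := mem_affineSpan ℝ (Set.mem_range_self _)
    have hpi : p i ∈ sp := mem_affineSpan ℝ (Set.mem_range_self _)
    have A := EuclideanGeometry.dist_sq_eq_dist_orthogonalProjection_sq_add_dist_orthogonalProjection_sq
      (uv +ᵥ m') hqi
    rw [hproj] at A
    have B := EuclideanGeometry.dist_sq_eq_dist_orthogonalProjection_sq_add_dist_orthogonalProjection_sq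
      y₀ hpi
    rw [← hm, ← htd] at B
    have hzm : dist (uv +ᵥ m') m' = t := by
      rw [dist_eq_norm_vsub (E K), vadd_vsub, huvnorm]
    rw [hzm] at A
    rw [dist_comm (q i) m', hdist i, dist_comm m (p i)] at A
    have : dist (q i) (uv +ᵥ m') = dist (p i) y₀ := by
      nlinarith [dist_nonneg (x := q i) (y := uv +ᵥ m'), dist_nonneg (x := p i) (y := y₀)]
    rw [dist_comm, this, dist_comm, hd i]
  · intro hzmem
    have h1 : uv ∈ sq.direction := by
      have := AffineSubspace.vsub_mem_direction hzmem hm'mem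
      rwa [vadd_vsub] at this
    have h2 : uv = 0 := by
      have := Submodule.orthogonal_disjoint sq.direction
      exact Submodule.disjoint_def.1 this uv h1 huvmem
    rw [h2, norm_zero] at huvnorm
    exact absurd huvnorm.symm (ne_of_gt ht)

end main



/-- Clique form: if the prescribed clique distances c admit one realization p in
general position (affinely independent) together with a trilateration solution y₀
outside the affine span of p, then EVERY affinely independent realization q of the
clique distances admits exactly two trilateration solutions. -/
theorem trilateration_clique_always_two (K : ℕ) (hK : 1 ≤ K)
    (c : Fin K → Fin K → ℝ) (d : Fin K → ℝ)
    (p : Fin K → EuclideanSpace ℝ (Fin K)) (hp : AffineIndependent ℝ p)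
    (hpc : ∀ i j, dist (p i) (p j) = c i j)
    (y₀ : EuclideanSpace ℝ (Fin K)) (hy₀ : y₀ ∉ affineSpan ℝ (Set.range p))
    (hd : ∀ i, dist y₀ (p i) = d i) :
    ∀ q : Fin K → EuclideanSpace ℝ (Fin K), AffineIndependent ℝ q →
      (∀ i j, dist (q i) (q j) = c i j) →
      {z : EuclideanSpace ℝ (Fin K) | ∀ i, dist z (q i) = d i}.encard = 2 := by
  intro q hq hqc
  haveI : Nonempty (Fin K) := ⟨⟨0, hK⟩⟩
  haveI : Nonempty ↥(affineSpan ℝ (Set.range p)) :=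
    ⟨⟨p ⟨0, hK⟩, mem_affineSpan ℝ (Set.mem_range_self _)⟩⟩
  haveI : Nonempty ↥(affineSpan ℝ (Set.range q)) :=
    ⟨⟨q ⟨0, hK⟩, mem_affineSpan ℝ (Set.mem_range_self _)⟩⟩
  obtain ⟨z, hz, hzs⟩ := aux_exists hK hpc hy₀ hd hq hqc
  have hset : {z' : EuclideanSpace ℝ (Fin K) | ∀ i, dist z' (q i) = d i}
      = {z, EuclideanGeometry.reflection (affineSpan ℝ (Set.range q)) z} := by
    ext x
    simp only [Set.mem_setOf_eq, Set.mem_insert_iff, Set.mem_singleton_iff]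
    constructor
    · intro hx
      have hzx : ∀ i, dist z (q i) = dist x (q i) := fun i => (hz i).trans (hx i).symm
      exact aux_structure hK hq hzx
    · rintro (rfl | rfl)
      · exact hz
      · intro i
        rw [dist_comm,
          EuclideanGeometry.dist_reflection_eq_of_mem _
            (mem_affineSpan ℝ (Set.mem_range_self i)), dist_comm]
        exact hz i
  rw [hset]
  apply Set.encard_pair
  intro hcontra
  exact hzs ((EuclideanGeometry.reflection_eq_self_iff z).mp hcontra.symm)
end

section
/- (Corollary 3.5: combinatorial DDGP instances with discretization edges only have exactly 2^(n−K) realizations extending a fixed initial clique.) Fix integers K ≥ 1 and n > K. Let E be a set of unordered pairs of elements of Fin n (the edge set), let d : Fin n → Fin n → ℝ be symmetric edge weights, and for each j with K ≤ j < n let U j be a K-element subset of {0,…,j−1}. Assume: (i) all pairs of distinct vertices i, i' < K belong to E; (ii) for each j ≥ K and each i ∈ U j, {i,j} ∈ E; (iii) for each j ≥ K, all pairs of distinct elements of U j belong to E (each U j induces a clique); (iv) every edge {i,j} ∈ E with i < j and j ≥ K satisfies i ∈ U j (no pruning edges). Call x : Fin n → ℝ^K a realization if dist(x i, x j) = d i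 j for every {i,j} ∈ E. Suppose there exists a realization x₀ such that for every j with K ≤ j < n, the K+1 points {x₀ i : i ∈ U j} ∪ {x₀ j} form an affinely independent family. Then the set of realizations x satisfying x i = x₀ i for all i < K has exactly 2^(n−K) elements. -/
open RealInnerProductSpace

private lemma ddgp_sq_eq {a b : ℝ} (ha : 0 ≤ a) (hb : 0 ≤ b) (h : a ^ 2 = b ^ 2) : a = b := by
  nlinarith

private lemma ddgp_gram_li {ι : Type*} [Fintype ι] {F : Type*}
    [NormedAddCommGroup F] [InnerProductSpace ℝ F] (v w : ι → F)
    (h : ∀ i j, ⟪w i, w j⟫ = ⟪v i, v j⟫) (hv : LinearIndependent ℝ v) :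
    LinearIndependent ℝ w := by
  rw [Fintype.linearIndependent_iff] at hv ⊢
  intro g hg
  have h0 : ⟪∑ i, g i • v i, ∑ i, g i • v i⟫ = ⟪∑ i, g i • w i, ∑ i, g i • w i⟫ := by
    simp only [sum_inner, inner_sum, real_inner_smul_left, real_inner_smul_right, h]
  rw [hg, inner_zero_left] at h0
  exact hv g (inner_self_eq_zero.mp h0)

private lemma ddgp_two_point {K : ℕ} (hK : 1 ≤ K) {ι : Type*} [Fintype ι] [Nonempty ι]
    (hcard : Fintype.card ι = K) (a b : ι → EuclideanSpace ℝ (Fin K))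
    (q₀ : EuclideanSpace ℝ (Fin K))
    (haff : AffineIndependent ℝ a)
    (hq₀ : q₀ ∉ affineSpan ℝ (Set.range a))
    (hcong : ∀ i j, dist (b i) (b j) = dist (a i) (a j)) :
    {p : EuclideanSpace ℝ (Fin K) | ∀ i, dist p (b i) = dist q₀ (a i)}.encard = 2 := by
  classical
  obtain ⟨i₀⟩ := ‹Nonempty ι›
  set v : {x : ι // x ≠ i₀} → EuclideanSpace ℝ (Fin K) := fun i => a ↑i -ᵥ a i₀ with hvdef
  set w : {x : ι // x ≠ i₀} → EuclideanSpace ℝ (Fin K) := fun i => b ↑i -ᵥ b i₀ with hwdef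
  have hvs : ∀ i, v i = a ↑i - a i₀ := fun i => rfl
  have hws : ∀ i, w i = b ↑i - b i₀ := fun i => rfl
  have hgram : ∀ i j, ⟪w i, w j⟫ = ⟪v i, v j⟫ := by
    intro i j
    have polar : ∀ x y : EuclideanSpace ℝ (Fin K),
        ⟪x, y⟫ = (‖x‖ ^ 2 + ‖y‖ ^ 2 - ‖x - y‖ ^ 2) / 2 := by
      intro x y
      rw [norm_sub_sq_real]
      ring
    have h1 : ‖w i‖ = ‖v i‖ := by
      rw [hvs, hws, ← dist_eq_norm, ← dist_eq_norm, hcong]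
    have h2 : ‖w j‖ = ‖v j‖ := by
      rw [hvs, hws, ← dist_eq_norm, ← dist_eq_norm, hcong]
    have h3 : ‖w i - w j‖ = ‖v i - v j‖ := by
      rw [hvs, hws, hvs, hws, sub_sub_sub_cancel_right, sub_sub_sub_cancel_right,
        ← dist_eq_norm, ← dist_eq_norm, hcong]
    rw [polar, polar, h1, h2, h3]
  have liv : LinearIndependent ℝ v := (affineIndependent_iff_linearIndependent_vsub ℝ a i₀).mp haff
  have liw : LinearIndependent ℝ w := ddgp_gram_li v w hgram liv
  have haffb : AffineIndependent ℝ b := (affineIndependent_iff_linearIndependent_vsub ℝ b i₀).mpr liw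
  set V : Submodule ℝ (EuclideanSpace ℝ (Fin K)) := Submodule.span ℝ (Set.range v) with hVdef
  set W : Submodule ℝ (EuclideanSpace ℝ (Fin K)) := Submodule.span ℝ (Set.range w) with hWdef
  set bV : Module.Basis {x : ι // x ≠ i₀} ℝ V := Module.Basis.span liv with hbVdef
  set T : V →ₗ[ℝ] EuclideanSpace ℝ (Fin K) := Module.Basis.constr bV ℝ w with hTdef
  have hT : ∀ i, T (bV i) = w i := fun i => Module.Basis.constr_basis bV ℝ w i
  have hbVc : ∀ i, (bV i : EuclideanSpace ℝ (Fin K)) = v i := fun i => congrArg Subtype.val (Module.Basis.span_apply liv i)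
  have hTmem : ∀ x : V, T x ∈ W := by
    intro x
    have hx : (∑ i, bV.repr x i • bV i) = x := bV.sum_repr x
    have : T x = ∑ i, bV.repr x i • w i := by
      rw [← hx, map_sum]
      simp [hT]
    rw [this]
    exact Submodule.sum_mem _ fun i _ => Submodule.smul_mem _ _
      (Submodule.subset_span (Set.mem_range_self i))
  have Tinner : ∀ x y : V, ⟪T x, T y⟫ = ⟪(x : EuclideanSpace ℝ (Fin K)), (y : EuclideanSpace ℝ (Fin K))⟫ := by
    have hbil : ((innerₗ (EuclideanSpace ℝ (Fin K))).compl₁₂ T T)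
        = (innerₗ (EuclideanSpace ℝ (Fin K))).compl₁₂ V.subtype V.subtype := by
      apply LinearMap.ext_basis bV bV
      intro i j
      simp only [LinearMap.compl₁₂_apply, innerₗ_apply_apply, hT, Submodule.subtype_apply, hbVc]
      exact hgram i j
    intro x y
    have := LinearMap.congr_fun (LinearMap.congr_fun hbil x) y
    simpa only [LinearMap.compl₁₂_apply, innerₗ_apply_apply, Submodule.subtype_apply] using this
  set u : EuclideanSpace ℝ (Fin K) := q₀ -ᵥ a i₀ with hudef
  have hu : u ∉ V := by
    intro hmem
    apply hq₀
    have ha0 : a i₀ ∈ affineSpan ℝ (Set.range a) := mem_affineSpan ℝ (Set.mem_range_self i₀)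
    rw [← AffineSubspace.vsub_right_mem_direction_iff_mem ha0 q₀, direction_affineSpan,
      vectorSpan_range_eq_span_range_vsub_right_ne ℝ a i₀] at *
    exact hmem
  set u1 : V := V.orthogonalProjectionOnto u with hu1def
  set u2 : EuclideanSpace ℝ (Fin K) := u - u1 with hu2def
  have hu2mem : u2 ∈ Vᗮ := by
    have := V.sub_starProjection_mem_orthogonal u
    rwa [← Submodule.coe_orthogonalProjectionOnto_apply] at this
  have hu2ne : u2 ≠ 0 := by
    intro h
    apply hu
    have : u = (u1 : EuclideanSpace ℝ (Fin K)) := by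
      rw [hu2def] at h
      linear_combination (norm := module) h
    rw [this]
    exact u1.2
  have hcard' : Fintype.card {x : ι // x ≠ i₀} = K - 1 := by
    rw [Fintype.card_subtype_compl, Fintype.card_subtype_eq, hcard]
  have hWrank : Module.finrank ℝ W = K - 1 := by
    rw [hWdef, finrank_span_eq_card liw, hcard']
  have hEK : Module.finrank ℝ (EuclideanSpace ℝ (Fin K)) = K := finrank_euclideanSpace_fin
  have hWperp : Module.finrank ℝ Wᗮ = 1 := by
    have := Submodule.finrank_add_finrank_orthogonal W
    rw [hWrank, hEK] at this
    omega
  have hWbot : Wᗮ ≠ ⊥ := by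
    intro h
    rw [h, finrank_bot] at hWperp
    omega
  obtain ⟨e0, he0mem, he0ne⟩ := (Submodule.ne_bot_iff Wᗮ).mp hWbot
  have hu2norm : ‖u2‖ ≠ 0 := fun h => hu2ne (norm_eq_zero.mp h)
  set c : ℝ := ‖u2‖ / ‖e0‖ with hcdef
  have hce0 : ‖c • e0‖ = ‖u2‖ := by
    rw [norm_smul, hcdef, Real.norm_eq_abs, abs_div, abs_of_nonneg (norm_nonneg _),
      abs_of_nonneg (norm_nonneg _), div_mul_cancel₀]
    exact norm_ne_zero_iff.mpr he0ne
  set z : EuclideanSpace ℝ (Fin K) := T u1 + c • e0 with hzdef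
  set q : EuclideanSpace ℝ (Fin K) := b i₀ + z with hqdef
  have hTu1W : T u1 ∈ W := hTmem u1
  have hTu1ce : ⟪T u1, c • e0⟫ = 0 :=
    Submodule.inner_right_of_mem_orthogonal hTu1W (Submodule.smul_mem _ _ he0mem)
  have hu1u2 : ⟪(u1 : EuclideanSpace ℝ (Fin K)), u2⟫ = 0 :=
    Submodule.inner_right_of_mem_orthogonal u1.2 hu2mem
  have hTu1n : ‖T u1‖ ^ 2 = ‖(u1 : EuclideanSpace ℝ (Fin K))‖ ^ 2 := by
    rw [← real_inner_self_eq_norm_sq, ← real_inner_self_eq_norm_sq, Tinner]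
  have hnormz : ‖z‖ ^ 2 = ‖u‖ ^ 2 := by
    have h1 : ‖z‖ ^ 2 = ‖T u1‖ ^ 2 + 2 * ⟪T u1, c • e0⟫ + ‖c • e0‖ ^ 2 := norm_add_sq_real _ _
    have h2 : u = (u1 : EuclideanSpace ℝ (Fin K)) + u2 := by
      rw [hu2def]; abel
    have h3 : ‖u‖ ^ 2 = ‖(u1 : EuclideanSpace ℝ (Fin K))‖ ^ 2 + 2 * ⟪(u1 : EuclideanSpace ℝ (Fin K)), u2⟫ + ‖u2‖ ^ 2 := by
      rw [h2]; exact norm_add_sq_real _ _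
    rw [h1, h3, hTu1ce, hu1u2, hce0, hTu1n]
  have hzw : ∀ i : {x : ι // x ≠ i₀}, ⟪z, w i⟫ = ⟪u, v i⟫ := by
    intro i
    have hwW : w i ∈ W := Submodule.subset_span (Set.mem_range_self i)
    have h1 : ⟪c • e0, w i⟫ = 0 :=
      Submodule.inner_left_of_mem_orthogonal hwW (Submodule.smul_mem _ _ he0mem)
    have h2 : ⟪T u1, w i⟫ = ⟪(u1 : EuclideanSpace ℝ (Fin K)), v i⟫ := by
      rw [← hT i, Tinner, hbVc]
    have h3 : u = (u1 : EuclideanSpace ℝ (Fin K)) + u2 := by rw [hu2def]; abel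
    have h4 : ⟪u2, v i⟫ = 0 :=
      Submodule.inner_left_of_mem_orthogonal (Submodule.subset_span (Set.mem_range_self i)) hu2mem
    rw [hzdef, inner_add_left, h1, h2, add_zero, h3, inner_add_left, h4, add_zero]
  -- the constructed point has the required distances
  have hqdist : ∀ i, dist q (b i) = dist q₀ (a i) := by
    intro i
    by_cases hi : i = i₀
    · subst hi
      have h1 : dist q (b i) = ‖z‖ := by
        rw [hqdef, dist_eq_norm, add_sub_cancel_left]
      have h2 : dist q₀ (a i) = ‖u‖ := by
        rw [hudef, dist_eq_norm]; rfl
      rw [h1, h2]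
      exact ddgp_sq_eq (norm_nonneg _) (norm_nonneg _) hnormz
    · set i' : {x : ι // x ≠ i₀} := ⟨i, hi⟩ with hi'def
      have h1 : q - b i = z - w i' := by
        rw [hqdef, hws]
        abel
      have h2 : q₀ - a i = u - v i' := by
        rw [hudef, hvs]
        show q₀ - a i = (q₀ - a i₀) - (a i - a i₀)
        abel
      have h3 : ‖z - w i'‖ ^ 2 = ‖u - v i'‖ ^ 2 := by
        have e1 := norm_sub_sq_real z (w i')
        have e2 := norm_sub_sq_real u (v i')
        have e3 : ‖w i'‖ ^ 2 = ‖v i'‖ ^ 2 := by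
          rw [← real_inner_self_eq_norm_sq, ← real_inner_self_eq_norm_sq]
          exact hgram i' i'
        rw [e1, e2, hnormz, hzw, e3]
      rw [dist_eq_norm, dist_eq_norm, h1, h2]
      exact ddgp_sq_eq (norm_nonneg _) (norm_nonneg _) h3
  -- q is off the affine span of b
  have hWspan : vectorSpan ℝ (Set.range b) = W := by
    rw [vectorSpan_range_eq_span_range_vsub_right_ne ℝ b i₀, hWdef]
  have hqspan : q ∉ affineSpan ℝ (Set.range b) := by
    intro hmem
    have hb0 : b i₀ ∈ affineSpan ℝ (Set.range b) := mem_affineSpan ℝ (Set.mem_range_self i₀)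
    have hz : z ∈ W := by
      have := (AffineSubspace.vsub_right_mem_direction_iff_mem hb0 q).mpr hmem
      rw [direction_affineSpan, hWspan] at this
      have hzq : q -ᵥ b i₀ = z := by
        rw [hqdef]
        show (b i₀ + z) - b i₀ = z
        abel
      rwa [hzq] at this
    have hce : c • e0 ∈ W := by
      have : c • e0 = z - T u1 := by rw [hzdef]; abel
      rw [this]
      exact Submodule.sub_mem _ hz hTu1W
    have h0 : ⟪c • e0, c • e0⟫ = 0 :=
      Submodule.inner_left_of_mem_orthogonal hce (Submodule.smul_mem _ _ he0mem)
    have : c • e0 = 0 := inner_self_eq_zero.mp h0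
    exact (smul_ne_zero (div_ne_zero hu2norm (norm_ne_zero_iff.mpr he0ne)) he0ne) this
  -- the two-element description
  set S : AffineSubspace ℝ (EuclideanSpace ℝ (Fin K)) := affineSpan ℝ (Set.range b) with hSdef
  haveI : Nonempty S := ⟨⟨b i₀, mem_affineSpan ℝ (Set.mem_range_self i₀)⟩⟩
  set q' : EuclideanSpace ℝ (Fin K) := EuclideanGeometry.reflection S q with hq'def
  have hq'ne : q' ≠ q := by
    rw [hq'def, Ne, EuclideanGeometry.reflection_eq_self_iff]
    exact hqspan
  have hq'dist : ∀ i, dist q' (b i) = dist q₀ (a i) := by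
    intro i
    have hbi : b i ∈ S := mem_affineSpan ℝ (Set.mem_range_self i)
    rw [hq'def, dist_comm, EuclideanGeometry.dist_reflection_eq_of_mem S hbi q, dist_comm]
    exact hqdist i
  have hSrank : Module.finrank ℝ S.direction = K - 1 := by
    rw [hSdef, direction_affineSpan]
    exact haffb.finrank_vectorSpan (by omega)
  have hPset : {p : EuclideanSpace ℝ (Fin K) | ∀ i, dist p (b i) = dist q₀ (a i)} = {q, q'} := by
    ext p
    simp only [Set.mem_setOf_eq, Set.mem_insert_iff, Set.mem_singleton_iff]
    constructor
    · intro hp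
      by_cases hpq : p = q
      · exact Or.inl hpq
      · right
        have hdist : ∀ i, dist (b i) p = dist (b i) q := by
          intro i
          rw [dist_comm, hp i, ← hqdist i, dist_comm]
        have hsub : S ≤ AffineSubspace.perpBisector p q := by
          rw [hSdef, affineSpan_le]
          rintro _ ⟨i, rfl⟩
          exact AffineSubspace.mem_perpBisector_iff_dist_eq.mpr (hdist i)
        have hqp : q -ᵥ p ≠ 0 := vsub_ne_zero.mpr (Ne.symm hpq)
        have hPrank : Module.finrank ℝ (AffineSubspace.perpBisector p q).direction = K - 1 := by
          rw [AffineSubspace.direction_perpBisector]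
          have h1 : Module.finrank ℝ (ℝ ∙ (q -ᵥ p)) = 1 := finrank_span_singleton hqp
          have h2 := Submodule.finrank_add_finrank_orthogonal (ℝ ∙ (q -ᵥ p))
          rw [h1, hEK] at h2
          omega
        have hdir : S.direction = (AffineSubspace.perpBisector p q).direction :=
          Submodule.eq_of_le_of_finrank_eq (AffineSubspace.direction_le hsub)
            (by rw [hSrank, hPrank])
        have hSeq : S = AffineSubspace.perpBisector p q := by
          apply AffineSubspace.ext_of_direction_eq hdir
          exact ⟨b i₀, mem_affineSpan ℝ (Set.mem_range_self i₀),
            hsub (mem_affineSpan ℝ (Set.mem_range_self i₀))⟩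
        have hmid : midpoint ℝ p q ∈ S := by
          rw [hSeq]
          exact AffineSubspace.midpoint_mem_perpBisector p q
        have hproj : (EuclideanGeometry.orthogonalProjection S q : EuclideanSpace ℝ (Fin K)) = midpoint ℝ p q := by
          have hset := EuclideanGeometry.inter_eq_singleton_orthogonalProjection (s := S) q
          have hmem2 : midpoint ℝ p q ∈ (S : Set (EuclideanSpace ℝ (Fin K))) ∩
              AffineSubspace.mk' q S.directionᗮ := by
            refine ⟨hmid, ?_⟩
            show midpoint ℝ p q ∈ AffineSubspace.mk' q S.directionᗮ
            rw [AffineSubspace.mem_mk']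
            have hdirperp : S.directionᗮ = ℝ ∙ (q -ᵥ p) := by
              rw [hdir, AffineSubspace.direction_perpBisector, Submodule.orthogonal_orthogonal]
            rw [hdirperp, Submodule.mem_span_singleton]
            refine ⟨-(2⁻¹ : ℝ), ?_⟩
            show -(2⁻¹ : ℝ) • (q - p) = midpoint ℝ p q - q
            rw [midpoint_eq_smul_add, invOf_eq_inv]
            module
          rw [Set.ext_iff] at hset
          have := (hset (midpoint ℝ p q)).mp hmem2
          exact (Set.mem_singleton_iff.mp this).symm
        have : EuclideanGeometry.reflection S q = p := by
          rw [EuclideanGeometry.reflection_apply', hproj]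
          show (midpoint ℝ p q - q) + midpoint ℝ p q = p
          rw [midpoint_eq_smul_add, invOf_eq_inv]
          module
        rw [hq'def, this]
    · rintro (rfl | rfl)
      · exact hqdist
      · exact hq'dist
  rw [hPset]
  exact Set.encard_pair (Ne.symm hq'ne)

private def ddgpS (K n : ℕ) (E : Set (Sym2 (Fin n))) (d : Fin n → Fin n → ℝ)
    (x₀ : Fin n → EuclideanSpace ℝ (Fin K)) (m : ℕ) :
    Set (Fin n → EuclideanSpace ℝ (Fin K)) :=
  {x | (∀ e ∈ E, ∀ i j : Fin n, e = s(i, j) → (i : ℕ) < m → (j : ℕ) < m →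
        dist (x i) (x j) = d i j) ∧
      (∀ i : Fin n, (i : ℕ) < K → x i = x₀ i) ∧
      (∀ i : Fin n, m ≤ (i : ℕ) → x i = x₀ i)}

/-- A combinatorial DDGP instance (every adjacent-predecessor set U j induces a
clique) with discretization edges only has exactly 2^(n-K) realizations extending
a fixed realization of the initial clique, provided some realization exists whose
trilateration steps are all in general position. -/
theorem combinatorial_ddgp_count (K n : ℕ) (hK : 1 ≤ K) (hn : K < n)
    (E : Set (Sym2 (Fin n)))
    (d : Fin n → Fin n → ℝ) (hd : ∀ i j, d i j = d j i)
    (U : Fin n → Finset (Fin n))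
    (hUcard : ∀ j : Fin n, K ≤ (j : ℕ) → (U j).card = K)
    (hUpred : ∀ j : Fin n, K ≤ (j : ℕ) → ∀ i ∈ U j, (i : ℕ) < (j : ℕ))
    -- (i) the first K vertices form a clique:
    (hclique0 : ∀ i i' : Fin n, (i : ℕ) < K → (i' : ℕ) < K → i ≠ i' → s(i, i') ∈ E)
    -- (ii) each vertex is adjacent to its predecessors in U j:
    (hUadj : ∀ j : Fin n, K ≤ (j : ℕ) → ∀ i ∈ U j, s(i, j) ∈ E)
    -- (iii) each U j induces a clique:
    (hUclique : ∀ j : Fin n, K ≤ (j : ℕ) → ∀ i ∈ U j, ∀ i' ∈ U j, i ≠ i' → s(i, i') ∈ E)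
    -- (iv) no pruning edges:
    (hnoprune : ∀ i j : Fin n, s(i, j) ∈ E → (i : ℕ) < (j : ℕ) → K ≤ (j : ℕ) → i ∈ U j)
    (x₀ : Fin n → EuclideanSpace ℝ (Fin K))
    (hx₀ : ∀ e ∈ E, ∀ i j : Fin n, e = s(i, j) → dist (x₀ i) (x₀ j) = d i j)
    -- general position of the trilateration steps of x₀:
    (hgen : ∀ j : Fin n, K ≤ (j : ℕ) →
      AffineIndependent ℝ (fun i : ↥(insert j (U j) : Finset (Fin n)) => x₀ i)) :
    {x : Fin n → EuclideanSpace ℝ (Fin K) |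
        (∀ e ∈ E, ∀ i j : Fin n, e = s(i, j) → dist (x i) (x j) = d i j) ∧
        ∀ i : Fin n, (i : ℕ) < K → x i = x₀ i}.encard = 2 ^ (n - K) := by
  classical
  have key : ∀ m, K ≤ m → m ≤ n → (ddgpS K n E d x₀ m).encard = 2 ^ (m - K) := by
    refine Nat.le_induction ?_ ?_
    · -- base case m = K
      intro _
      have hSK : ddgpS K n E d x₀ K = {x₀} := by
        ext x
        simp only [ddgpS, Set.mem_setOf_eq, Set.mem_singleton_iff]
        constructor
        · rintro ⟨-, h1, h2⟩
          funext i
          rcases lt_or_ge (i : ℕ) K with h | h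
          exacts [h1 i h, h2 i h]
        · rintro rfl
          exact ⟨fun e he i j hij _ _ => hx₀ e he i j hij, fun _ _ => rfl, fun _ _ => rfl⟩
      rw [hSK, Nat.sub_self, pow_zero, Set.encard_singleton]
    · -- inductive step
      intro m hKm ih hm1n
      have hmn : m < n := hm1n
      have ihv := ih (le_of_lt hmn)
      set m' : Fin n := ⟨m, hmn⟩ with hm'def
      have hKm' : K ≤ (m' : ℕ) := hKm
      have hnem : ∀ i : Fin n, (i : ℕ) ≠ m → i ≠ m' := fun i h hh => h (by rw [hh])
      have hjU : m' ∉ U m' := fun h => absurd (hUpred m' hKm' m' h) (lt_irrefl _)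
      have hm'v : (m' : ℕ) = m := rfl
      -- the trilateration set for each partial solution has exactly two points
      have hPy : ∀ y ∈ ddgpS K n E d x₀ m,
          ({p : EuclideanSpace ℝ (Fin K) | ∀ i ∈ U m', dist p (y i) = d i m'}).encard = 2 := by
        intro y hy
        obtain ⟨hedge, hpin, htail⟩ := hy
        have hUne : Nonempty ↥(U m') :=
          Finset.Nonempty.to_subtype (Finset.card_pos.mp (by rw [hUcard m' hKm']; omega))
        have hcard : Fintype.card ↥(U m') = K := by
          rw [Fintype.card_coe]; exact hUcard m' hKm'
        have haff : AffineIndependent ℝ (fun i : ↥(U m') => x₀ ↑i) := by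
          have := (hgen m' hKm').comp_embedding
            ⟨fun i : ↥(U m') => (⟨↑i, Finset.mem_insert_of_mem i.2⟩ :
                ↥(insert m' (U m') : Finset (Fin n))),
             fun i j hij => Subtype.ext (by have h2 := congrArg Subtype.val hij; exact h2)⟩
          exact this
        have hrange : Set.range (fun i : ↥(U m') => x₀ ↑i)
            = (fun i : ↥(insert m' (U m') : Finset (Fin n)) => x₀ ↑i) ''
              (Set.univ \ {(⟨m', Finset.mem_insert_self _ _⟩ :
                ↥(insert m' (U m') : Finset (Fin n)))}) := by
          ext z
          constructor
          · rintro ⟨i, rfl⟩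
            refine ⟨⟨↑i, Finset.mem_insert_of_mem i.2⟩, ⟨trivial, ?_⟩, rfl⟩
            simp only [Set.mem_singleton_iff]
            intro h
            have hv : (i : Fin n) = m' := congrArg Subtype.val h
            have h2 := i.2
            rw [hv] at h2
            exact hjU h2
          · rintro ⟨i, ⟨-, hi⟩, rfl⟩
            simp only [Set.mem_singleton_iff] at hi
            have hiU : ↑i ∈ U m' := by
              rcases Finset.mem_insert.mp i.2 with h | h
              · exact absurd (Subtype.ext h) hi
              · exact h
            exact ⟨⟨↑i, hiU⟩, rfl⟩
        have hq₀ : x₀ m' ∉ affineSpan ℝ (Set.range fun i : ↥(U m') => x₀ ↑i) := by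
          rw [hrange]
          exact (hgen m' hKm').notMem_affineSpan_diff _ _
        have hcong : ∀ i j : ↥(U m'), dist (y ↑i) (y ↑j) = dist (x₀ ↑i) (x₀ ↑j) := by
          intro i j
          by_cases hij : (i : Fin n) = ↑j
          · rw [hij]
            simp
          · have hE : s((i : Fin n), (j : Fin n)) ∈ E := hUclique m' hKm' _ i.2 _ j.2 hij
            rw [hedge _ hE i j rfl (hUpred m' hKm' _ i.2) (hUpred m' hKm' _ j.2),
              hx₀ _ hE i j rfl]
        have h2 := ddgp_two_point hK hcard (fun i : ↥(U m') => x₀ ↑i) (fun i => y ↑i)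
          (x₀ m') haff hq₀ hcong
        have hset : {p : EuclideanSpace ℝ (Fin K) | ∀ i ∈ U m', dist p (y i) = d i m'}
            = {p : EuclideanSpace ℝ (Fin K) |
                ∀ i : ↥(U m'), dist p (y ↑i) = dist (x₀ m') (x₀ ↑i)} := by
          have hdm : ∀ i ∈ U m', dist (x₀ m') (x₀ i) = d i m' := by
            intro i hi
            rw [dist_comm]
            exact hx₀ _ (hUadj m' hKm' i hi) i m' rfl
          ext p
          simp only [Set.mem_setOf_eq]
          constructor
          · intro hp i
            rw [hdm ↑i i.2]
            exact hp ↑i i.2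
          · intro hp i hi
            rw [← hdm i hi]
            exact hp ⟨i, hi⟩
        rw [hset]
        exact h2
      -- choose the two points for each partial solution
      have hchoice : ∀ y : Fin n → EuclideanSpace ℝ (Fin K),
          ∃ pq : EuclideanSpace ℝ (Fin K) × EuclideanSpace ℝ (Fin K),
            y ∈ ddgpS K n E d x₀ m → pq.1 ≠ pq.2 ∧
              {p : EuclideanSpace ℝ (Fin K) | ∀ i ∈ U m', dist p (y i) = d i m'}
                = {pq.1, pq.2} := by
        intro y
        by_cases hy : y ∈ ddgpS K n E d x₀ m
        · obtain ⟨p1, p2, hne, hsets⟩ := Set.encard_eq_two.mp (hPy y hy)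
          exact ⟨(p1, p2), fun _ => ⟨hne, hsets⟩⟩
        · exact ⟨(0, 0), fun h => absurd h hy⟩
      choose pq hpq using hchoice
      -- updating a partial solution with an admissible point gives a solution one level up
      have hupdate_mem : ∀ y ∈ ddgpS K n E d x₀ m,
          ∀ p ∈ {p : EuclideanSpace ℝ (Fin K) | ∀ i ∈ U m', dist p (y i) = d i m'},
            Function.update y m' p ∈ ddgpS K n E d x₀ (m + 1) := by
        intro y hy p hp
        obtain ⟨hedge, hpin, htail⟩ := hy
        have hup : ∀ i : Fin n, i ≠ m' → Function.update y m' p i = y i :=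
          fun i hi => Function.update_of_ne hi _ _
        refine ⟨?_, ?_, ?_⟩
        · intro e he i j hij hi hj
          by_cases him : (i : ℕ) = m <;> by_cases hjm : (j : ℕ) = m
          · have hi' : i = m' := Fin.ext him
            have hj' : j = m' := Fin.ext hjm
            subst hi'; subst hj'
            have h0 := hx₀ e he m' m' hij
            rw [dist_self] at h0
            rw [Function.update_self, dist_self]
            exact h0
          · -- i = m', j < m
            have hi' : i = m' := Fin.ext him
            subst hi'
            have heE : s(j, m') ∈ E := by rw [Sym2.eq_swap]; exact hij ▸ he
            have hjUm : j ∈ U m' := hnoprune j m' heE (by omega) hKm'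
            rw [Function.update_self, hup j (hnem j hjm)]
            rw [hd m' j]
            exact hp j hjUm
          · -- j = m', i < m
            have hj' : j = m' := Fin.ext hjm
            subst hj'
            have heE : s(i, m') ∈ E := hij ▸ he
            have hiUm : i ∈ U m' := hnoprune i m' heE (by omega) hKm'
            rw [Function.update_self, hup i (hnem i him), dist_comm]
            exact hp i hiUm
          · rw [hup i (hnem i him), hup j (hnem j hjm)]
            exact hedge e he i j hij (by omega) (by omega)
        · intro i hi
          rw [hup i (hnem i (by omega))]
          exact hpin i hi
        · intro i hi
          rw [hup i (hnem i (by omega))]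
          exact htail i (by omega)
      -- decomposition of a solution one level up
      have hmem_decomp : ∀ x ∈ ddgpS K n E d x₀ (m + 1),
          Function.update x m' (x₀ m') ∈ ddgpS K n E d x₀ m ∧
          (x m') ∈ {p : EuclideanSpace ℝ (Fin K) |
              ∀ i ∈ U m', dist p ((Function.update x m' (x₀ m')) i) = d i m'} ∧
          x = Function.update (Function.update x m' (x₀ m')) m' (x m') := by
        intro x hx
        obtain ⟨hedge, hpin, htail⟩ := hx
        have hup : ∀ i : Fin n, i ≠ m' → Function.update x m' (x₀ m') i = x i :=
          fun i hi => Function.update_of_ne hi _ _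
        refine ⟨⟨?_, ?_, ?_⟩, ?_, ?_⟩
        · intro e he i j hij hi hj
          rw [hup i (hnem i (by omega)), hup j (hnem j (by omega))]
          exact hedge e he i j hij (by omega) (by omega)
        · intro i hi
          rw [hup i (hnem i (by omega))]
          exact hpin i hi
        · intro i hi
          rcases eq_or_lt_of_le hi with h | h
          · have : i = m' := Fin.ext h.symm
            rw [this, Function.update_self]
          · rw [hup i (hnem i (by omega))]
            exact htail i (by omega)
        · intro i hiU
          have hi : (i : ℕ) < m := hUpred m' hKm' i hiU
          rw [hup i (hnem i (by omega))]
          have hE := hUadj m' hKm' i hiU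
          have := hedge _ hE i m' rfl (by omega) (by omega)
          rw [dist_comm]
          exact this
        · funext i
          by_cases hi : i = m'
          · subst hi
            rw [Function.update_self]
          · rw [Function.update_of_ne hi, Function.update_of_ne hi]
      have recover : ∀ y ∈ ddgpS K n E d x₀ m, ∀ p : EuclideanSpace ℝ (Fin K),
          Function.update (Function.update y m' p) m' (x₀ m') = y := by
        intro y hy p
        funext i
        by_cases hi : i = m'
        · subst hi
          rw [Function.update_self]
          exact (hy.2.2 m' le_rfl).symm
        · rw [Function.update_of_ne hi, Function.update_of_ne hi]
      have hinj : ∀ sel : (Fin n → EuclideanSpace ℝ (Fin K)) → EuclideanSpace ℝ (Fin K),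
          Set.InjOn (fun y => Function.update y m' (sel y)) (ddgpS K n E d x₀ m) := by
        intro sel y hy y' hy' h
        have h2 := congrArg (fun z => Function.update z m' (x₀ m')) h
        simp only at h2
        rwa [recover y hy, recover y' hy'] at h2
      set A := (fun y => Function.update y m' (pq y).1) '' (ddgpS K n E d x₀ m) with hA
      set B := (fun y => Function.update y m' (pq y).2) '' (ddgpS K n E d x₀ m) with hB
      have hAB : ddgpS K n E d x₀ (m + 1) = A ∪ B := by
        ext x
        constructor
        · intro hx
          obtain ⟨hy, hp, hxeq⟩ := hmem_decomp x hx
          obtain ⟨hne, hPset⟩ := hpq _ hy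
          rw [hPset] at hp
          rcases hp with h1 | h2
          · refine Or.inl ⟨_, hy, ?_⟩
            show Function.update (Function.update x m' (x₀ m')) m'
              ((pq (Function.update x m' (x₀ m'))).1) = x
            rw [← h1]
            exact hxeq.symm
          · refine Or.inr ⟨_, hy, ?_⟩
            show Function.update (Function.update x m' (x₀ m')) m'
              ((pq (Function.update x m' (x₀ m'))).2) = x
            rw [← h2]
            exact hxeq.symm
        · rintro (⟨y, hy, rfl⟩ | ⟨y, hy, rfl⟩)
          · exact hupdate_mem y hy _ (by rw [(hpq y hy).2]; exact Set.mem_insert _ _)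
          · exact hupdate_mem y hy _
              (by rw [(hpq y hy).2]; exact Set.mem_insert_of_mem _ rfl)
      have hdisj : Disjoint A B := by
        rw [Set.disjoint_left]
        rintro x ⟨y, hy, rfl⟩ ⟨y', hy', h⟩
        have hyy : y' = y := by
          have h2 := congrArg (fun z => Function.update z m' (x₀ m')) h
          simp only at h2
          rwa [recover y' hy', recover y hy] at h2
        subst hyy
        have hval : (pq y').2 = (pq y').1 := by
          have h3 := congrFun h m'
          simpa [Function.update_self] using h3
        exact (hpq y' hy').1 hval.symm
      rw [hAB, Set.encard_union_eq hdisj, (hinj _).encard_image,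
        (hinj _).encard_image, ihv]
      have hexp : m + 1 - K = (m - K) + 1 := by omega
      rw [hexp, pow_succ, mul_two]
  have hfinal : {x : Fin n → EuclideanSpace ℝ (Fin K) |
      (∀ e ∈ E, ∀ i j : Fin n, e = s(i, j) → dist (x i) (x j) = d i j) ∧
      ∀ i : Fin n, (i : ℕ) < K → x i = x₀ i} = ddgpS K n E d x₀ n := by
    ext x
    simp only [ddgpS, Set.mem_setOf_eq]
    constructor
    · rintro ⟨h1, h2⟩
      exact ⟨fun e he i j hij _ _ => h1 e he i j hij, h2,
        fun i hi => absurd i.isLt (not_lt.mpr hi)⟩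
    · rintro ⟨h1, h2, -⟩
      exact ⟨fun e he i j hij => h1 e he i j hij i.isLt j.isLt, h2⟩
  rw [hfinal]
  exact key n (le_of_lt hn) le_rfl
end

section
/- (Schoenberg criterion, used to characterize valid EDMs.) Let n ≥ 1 and let D : Matrix (Fin n) (Fin n) ℝ be symmetric with zero diagonal. Let J = 1 − (1/n)·𝟙𝟙ᵀ be the centering matrix, where 𝟙 is the all-ones column vector and 1 is the identity matrix. Then there exists a family x : Fin n → ℝ^K with D i j = dist(x i, x j)² for all i, j if and only if the matrix G = −(1/2)·(J * D * J) is positive semidefinite and has rank at most K. -/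
lemma schoenberg_scalar (n : ℕ) (hn : 1 ≤ n) (p : Fin n → Fin n → ℝ)
    (D : Fin n → Fin n → ℝ) (hD : ∀ i j, D i j = p i i - 2 * p i j + p j j) (i j : Fin n) :
    -(1/2 : ℝ) * (D i j - (n : ℝ)⁻¹ * ∑ k, D i k - (n : ℝ)⁻¹ * ∑ k, D k j
        + (n : ℝ)⁻¹ * ((n : ℝ)⁻¹ * ∑ k, ∑ l, D k l))
    = p i j - (n : ℝ)⁻¹ * ∑ k, p i k - (n : ℝ)⁻¹ * ∑ k, p k j
        + (n : ℝ)⁻¹ * ((n : ℝ)⁻¹ * ∑ k, ∑ l, p k l) := by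
  have hn0 : (n : ℝ) ≠ 0 := Nat.cast_ne_zero.2 (by omega)
  simp_rw [hD]
  simp only [Finset.sum_add_distrib, Finset.sum_sub_distrib, Finset.sum_const,
    Finset.card_univ, Fintype.card_fin, nsmul_eq_mul, Finset.mul_sum]
  simp only [← Finset.mul_sum]
  field_simp
  ring


open Matrix RealInnerProductSpace in
lemma gram_forward {E : Type*} [NormedAddCommGroup E] [InnerProductSpace ℝ E]
    (n : ℕ) (hn : 1 ≤ n) (x : Fin n → E) (i j : Fin n) :
    -(1/2 : ℝ) * (dist (x i) (x j) ^ 2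
        - (n : ℝ)⁻¹ * ∑ k, dist (x i) (x k) ^ 2
        - (n : ℝ)⁻¹ * ∑ k, dist (x k) (x j) ^ 2
        + (n : ℝ)⁻¹ * ((n : ℝ)⁻¹ * ∑ k, ∑ l, dist (x k) (x l) ^ 2))
    = ⟪x i - (n : ℝ)⁻¹ • ∑ k, x k, x j - (n : ℝ)⁻¹ • ∑ k, x k⟫ := by
  set p : Fin n → Fin n → ℝ := fun a b => ⟪x a, x b⟫ with hp
  have hD : ∀ a b, dist (x a) (x b) ^ 2 = p a a - 2 * p a b + p b b := by
    intro a b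
    rw [dist_eq_norm, @norm_sub_sq_real, hp]
    simp [real_inner_self_eq_norm_sq]
  rw [schoenberg_scalar n hn p _ hD i j]
  simp only [inner_sub_left, inner_sub_right, real_inner_smul_left, real_inner_smul_right,
    sum_inner, inner_sum, ← hp]
  rw [show ∑ k : Fin n, ((n:ℝ)⁻¹ * ∑ l, p l k) = (n:ℝ)⁻¹ * ∑ k, ∑ l, p k l from by
    rw [← Finset.mul_sum, Finset.sum_comm]]
  ring

lemma centered_entry (n : ℕ) (D : Matrix (Fin n) (Fin n) ℝ) (i j : Fin n) :
    (((1 - (n : ℝ)⁻¹ • Matrix.of (fun _ _ : Fin n => (1 : ℝ))) * D *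
        (1 - (n : ℝ)⁻¹ • Matrix.of (fun _ _ : Fin n => (1 : ℝ)))) : Matrix (Fin n) (Fin n) ℝ) i j
    = D i j - (n : ℝ)⁻¹ * ∑ k, D i k - (n : ℝ)⁻¹ * ∑ k, D k j
        + (n : ℝ)⁻¹ * ((n : ℝ)⁻¹ * ∑ k, ∑ l, D k l) := by
  simp only [sub_mul, mul_sub, one_mul, mul_one, Matrix.sub_apply, Matrix.smul_mul,
    Matrix.mul_smul, Matrix.smul_apply, smul_eq_mul, Matrix.mul_apply, Matrix.of_apply,
    Matrix.one_apply, one_mul, mul_one, mul_ite, mul_zero, ite_mul, zero_mul,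
    Finset.sum_add_distrib, Finset.sum_sub_distrib, Finset.sum_ite_eq, Finset.sum_ite_eq',
    Finset.mem_univ, if_true, Finset.mul_sum]

  have h1 : ∑ x : Fin n, D i x * (n:ℝ)⁻¹ = ∑ x : Fin n, (n:ℝ)⁻¹ * D i x :=
    Finset.sum_congr rfl fun x _ => mul_comm _ _
  have h2 : ∑ x : Fin n, (∑ k : Fin n, (n:ℝ)⁻¹ * D k x) * (n:ℝ)⁻¹
      = ∑ x : Fin n, ∑ k : Fin n, (n:ℝ)⁻¹ * ((n:ℝ)⁻¹ * D x k) := by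
    have e : ∀ x : Fin n, (∑ k : Fin n, (n:ℝ)⁻¹ * D k x) * (n:ℝ)⁻¹
        = ∑ k : Fin n, (n:ℝ)⁻¹ * ((n:ℝ)⁻¹ * D k x) := fun x => by
      rw [Finset.sum_mul]; exact Finset.sum_congr rfl fun k _ => by ring
    simp_rw [e]
    exact Finset.sum_comm
  rw [h1, h2]; ring

open Matrix RealInnerProductSpace

/-- Schoenberg's criterion: a symmetric hollow matrix D is the squared Euclidean
distance matrix of n points in ℝ^K iff G = -(1/2)·J D J is positive semidefinite
of rank at most K, where J = 1 - (1/n)·𝟙𝟙ᵀ is the centering matrix. -/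
theorem schoenberg_criterion (n K : ℕ) (hn : 1 ≤ n)
    (D : Matrix (Fin n) (Fin n) ℝ) (hsym : D.IsSymm) (hdiag : ∀ i, D i i = 0) :
    (∃ x : Fin n → EuclideanSpace ℝ (Fin K), ∀ i j, D i j = dist (x i) (x j) ^ 2) ↔
      ((-(1 / 2 : ℝ)) •
          ((1 - (n : ℝ)⁻¹ • Matrix.of (fun _ _ : Fin n => (1 : ℝ))) * D *
            (1 - (n : ℝ)⁻¹ • Matrix.of (fun _ _ : Fin n => (1 : ℝ))))).PosSemidef ∧
      ((-(1 / 2 : ℝ)) •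
          ((1 - (n : ℝ)⁻¹ • Matrix.of (fun _ _ : Fin n => (1 : ℝ))) * D *
            (1 - (n : ℝ)⁻¹ • Matrix.of (fun _ _ : Fin n => (1 : ℝ))))).rank ≤ K := by
  classical
  set G : Matrix (Fin n) (Fin n) ℝ := (-(1 / 2 : ℝ)) •
      ((1 - (n : ℝ)⁻¹ • Matrix.of (fun _ _ : Fin n => (1 : ℝ))) * D *
        (1 - (n : ℝ)⁻¹ • Matrix.of (fun _ _ : Fin n => (1 : ℝ)))) with hGdef
  have hGentry : ∀ i j, G i j = -(1/2 : ℝ) * (D i j - (n : ℝ)⁻¹ * ∑ k, D i k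
      - (n : ℝ)⁻¹ * ∑ k, D k j + (n : ℝ)⁻¹ * ((n : ℝ)⁻¹ * ∑ k, ∑ l, D k l)) := by
    intro i j
    rw [hGdef, Matrix.smul_apply, centered_entry, smul_eq_mul]
  constructor
  · rintro ⟨x, hx⟩
    set c : EuclideanSpace ℝ (Fin K) := (n : ℝ)⁻¹ • ∑ k, x k with hc
    set B : Matrix (Fin K) (Fin n) ℝ := Matrix.of (fun k i => (x i - c) k) with hB
    have key : G = Bᴴ * B := by
      ext i j
      rw [hGentry i j]
      simp only [hx]
      rw [gram_forward n hn x i j]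
      simp [hB, Matrix.mul_apply, Matrix.conjTranspose_apply, PiLp.inner_apply,
        RCLike.inner_apply, conj_trivial, hc]
      exact Finset.sum_congr rfl fun _ _ => mul_comm _ _
    refine ⟨key ▸ Matrix.posSemidef_conjTranspose_mul_self B, ?_⟩
    rw [key, Matrix.rank_conjTranspose_mul_self]
    exact (Matrix.rank_le_card_height B).trans (by simp)
  · rintro ⟨hpsd, hrank⟩
    set B : Matrix (Fin n) (Fin n) ℝ := (open scoped MatrixOrder in CFC.sqrt G) with hB
    have hBG : Bᴴ * B = G := by
      open scoped MatrixOrder in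
      rw [← Matrix.star_eq_conjTranspose, (CFC.sqrt_nonneg G).isSelfAdjoint.star_eq,
        CFC.sqrt_mul_sqrt_self G (Matrix.nonneg_iff_posSemidef.2 hpsd)]
    set y : Fin n → EuclideanSpace ℝ (Fin n) := fun i => WithLp.toLp 2 (fun k => B k i) with hy
    have hinner : ∀ i j, ⟪y i, y j⟫ = G i j := by
      intro i j
      rw [← hBG]
      simp [hy, Matrix.mul_apply, Matrix.conjTranspose_apply, PiLp.inner_apply,
        RCLike.inner_apply, conj_trivial]
      exact Finset.sum_congr rfl fun _ _ => mul_comm _ _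
    have hrowcol : ∀ a, ∑ k, D a k = ∑ k, D k a := by
      intro a
      exact Finset.sum_congr rfl fun k _ => (hsym.apply a k).symm
    have hdist : ∀ i j, dist (y i) (y j) ^ 2 = D i j := by
      intro i j
      rw [dist_eq_norm, @norm_sub_sq_real, ← real_inner_self_eq_norm_sq,
        ← real_inner_self_eq_norm_sq, hinner, hinner, hinner,
        hGentry i i, hGentry i j, hGentry j j, hdiag i, hdiag j,
        hrowcol i, hrowcol j]
      ring
    set S : Submodule ℝ (EuclideanSpace ℝ (Fin n)) := Submodule.span ℝ (Set.range y) with hS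
    have hdim : Module.finrank ℝ S ≤ K := by
      have h0 : B.rank ≤ K := by
        have h1 := Matrix.rank_conjTranspose_mul_self B
        rw [hBG] at h1
        omega
      rw [← Matrix.rank_transpose, Matrix.rank_eq_finrank_span_row] at h0
      have hS' : S = (Submodule.span ℝ (Set.range Bᵀ.row)).map
          (WithLp.linearEquiv 2 ℝ (Fin n → ℝ)).symm.toLinearMap := by
        rw [hS, Submodule.map_span, ← Set.range_comp]; rfl
      rw [hS', LinearEquiv.finrank_map_eq]
      exact h0
    let d := Module.finrank ℝ S
    have hdK : d ≤ K := hdim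
    let b : OrthonormalBasis (Fin d) ℝ S := stdOrthonormalBasis ℝ S
    let f : S →ₗ[ℝ] EuclideanSpace ℝ (Fin K) :=
      b.toBasis.constr ℝ (fun j => EuclideanSpace.single (Fin.castLE hdK j) 1)
    have hbo : Orthonormal ℝ (⇑b.toBasis) := by
      rw [OrthonormalBasis.coe_toBasis]; exact b.orthonormal
    have horth : Orthonormal ℝ (f ∘ ⇑b.toBasis) := by
      have he : (f ∘ ⇑b.toBasis) = fun j => EuclideanSpace.single (Fin.castLE hdK j) 1 := by
        funext j
        exact b.toBasis.constr_basis ℝ _ j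
      rw [he]
      have h2 := (EuclideanSpace.basisFun (Fin K) ℝ).orthonormal.comp (Fin.castLE hdK)
        (Fin.castLE_injective hdK)
      have h3 : (⇑(EuclideanSpace.basisFun (Fin K) ℝ) ∘ Fin.castLE hdK)
          = fun j => EuclideanSpace.single (Fin.castLE hdK j) 1 := by
        funext j
        simp [Function.comp, EuclideanSpace.basisFun_apply]
      rwa [h3] at h2
    let g : S →ₗᵢ[ℝ] EuclideanSpace ℝ (Fin K) := f.isometryOfOrthonormal hbo horth
    refine ⟨fun i => g ⟨y i, Submodule.subset_span (Set.mem_range_self i)⟩, fun i j => ?_⟩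
    rw [g.dist_map, Subtype.dist_eq]
    exact (hdist i j).symm
end

section
/- Let n ≥ 1 and let x : Fin n → ℝ^K be a family of points with squared Euclidean distance matrix D, i.e. D i j = dist(x i, x j)². Then the rank of D is at most K + 2. -/
/-- The squared Euclidean distance matrix of n points in ℝ^K has rank at most K + 2. -/
theorem edm_rank_le (n K : ℕ) (hn : 1 ≤ n) (x : Fin n → EuclideanSpace ℝ (Fin K)) :
    (Matrix.of (fun i j : Fin n => dist (x i) (x j) ^ 2)).rank ≤ K + 2 := by
  classical
  set P : Matrix (Fin n) (Fin K ⊕ Fin 2) ℝ :=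
    Matrix.of (fun i k => Sum.elim (fun k : Fin K => x i k)
      (fun t : Fin 2 => if t = 0 then ‖x i‖ ^ 2 else 1) k) with hP
  set Q : Matrix (Fin K ⊕ Fin 2) (Fin n) ℝ :=
    Matrix.of (fun k j => Sum.elim (fun k : Fin K => -2 * x j k)
      (fun t : Fin 2 => if t = 0 then 1 else ‖x j‖ ^ 2) k) with hQ
  have hD : (Matrix.of (fun i j : Fin n => dist (x i) (x j) ^ 2)) = P * Q := by
    ext i j
    have hdist : dist (x i) (x j) ^ 2
        = ‖x i‖ ^ 2 - 2 * (inner ℝ (x i) (x j) : ℝ) + ‖x j‖ ^ 2 := by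
      rw [dist_eq_norm, norm_sub_sq_real]
    have hinner : (inner ℝ (x i) (x j) : ℝ) = ∑ k : Fin K, x i k * x j k := by
      simp [PiLp.inner_apply, RCLike.inner_apply, mul_comm]
    simp only [Matrix.mul_apply, hP, hQ, Matrix.of_apply, Fintype.sum_sum_type,
      Sum.elim_inl, Sum.elim_inr, Fin.sum_univ_two]
    rw [hdist, hinner]
    simp only [if_pos rfl]
    norm_num
    have hs : ∑ k : Fin K, x i k * (2 * x j k) = 2 * ∑ k : Fin K, x i k * x j k := by
      rw [Finset.mul_sum]
      exact Finset.sum_congr rfl fun k _ => by ring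
    rw [hs]
    ring
  rw [hD]
  calc (P * Q).rank ≤ P.rank := Matrix.rank_mul_le_left P Q
    _ ≤ Fintype.card (Fin K ⊕ Fin 2) := P.rank_le_card_width
    _ = K + 2 := by simp
end

section
/- (Centered Gram matrix identity.) Let n ≥ 1, let x : Fin n → ℝ^K with squared Euclidean distance matrix D (D i j = dist(x i, x j)²), let J = 1 − (1/n)·𝟙𝟙ᵀ be the centering matrix, and let c = (1/n)·∑_{k} x k be the centroid of the points. Then for all i, j, the (i,j) entry of the matrix −(1/2)·(J * D * J) equals the inner product ⟪x i − c, x j − c⟫; i.e., −(1/2)·J D J is the Gram matrix of the centered realization. -/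
/-- The doubly centered squared EDM, -(1/2)·J D J, is the Gram matrix of the
centered realization: its (i,j) entry is ⟪x i - c, x j - c⟫ where c is the
centroid of the points. -/
theorem centered_gram_identity (n K : ℕ) (hn : 1 ≤ n)
    (x : Fin n → EuclideanSpace ℝ (Fin K))
    (D : Matrix (Fin n) (Fin n) ℝ) (hD : ∀ i j, D i j = dist (x i) (x j) ^ 2)
    (J : Matrix (Fin n) (Fin n) ℝ)
    (hJ : J = 1 - (n : ℝ)⁻¹ • Matrix.of (fun _ _ : Fin n => (1 : ℝ)))
    (c : EuclideanSpace ℝ (Fin K)) (hc : c = (n : ℝ)⁻¹ • ∑ k, x k) :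
    ∀ i j, ((-(1 / 2 : ℝ)) • (J * D * J)) i j = (inner ℝ (x i - c) (x j - c) : ℝ) := by
  have hn0 : (n : ℝ) ≠ 0 := by positivity
  set E : Matrix (Fin n) (Fin n) ℝ := Matrix.of (fun _ _ : Fin n => (1 : ℝ)) with hE
  set s : EuclideanSpace ℝ (Fin K) := ∑ k, x k with hs
  set g : Fin n → Fin n → ℝ := fun i j => (inner ℝ (x i) (x j) : ℝ) with hg
  have hD' : ∀ i j, D i j = g i i + g j j - 2 * g i j := by
    intro i j
    rw [hD, dist_eq_norm, @norm_sub_sq_real, hg]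
    simp only [real_inner_self_eq_norm_sq]
    ring
  set T : ℝ := ∑ k, g k k with hT
  have hsum1 : ∀ j, ∑ k, D k j = T + n * g j j - 2 * (inner ℝ s (x j) : ℝ) := by
    intro j
    simp only [hD', Finset.sum_sub_distrib, Finset.sum_add_distrib, hs, sum_inner, hg]
    rw [← Finset.mul_sum, Finset.sum_const]
    simp [hT, mul_comm, hg, PiLp.inner_apply, RCLike.inner_apply, conj_trivial]
    simp only [← real_inner_self_eq_norm_sq, PiLp.inner_apply, RCLike.inner_apply, conj_trivial]
  have hsum2 : ∀ i, ∑ k, D i k = n * g i i + T - 2 * (inner ℝ (x i) s : ℝ) := by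
    intro i
    simp only [hD', Finset.sum_sub_distrib, Finset.sum_add_distrib, hs, inner_sum, hg]
    rw [← Finset.mul_sum, Finset.sum_const]
    simp [hT, mul_comm, hg, PiLp.inner_apply, RCLike.inner_apply, conj_trivial]
    simp only [← real_inner_self_eq_norm_sq, PiLp.inner_apply, RCLike.inner_apply, conj_trivial]
  have hsum3 : ∑ k, ∑ l, D l k = 2 * n * T - 2 * (inner ℝ s s : ℝ) := by
    simp only [hsum1]
    simp only [Finset.sum_sub_distrib, Finset.sum_add_distrib, hs, inner_sum,
      Finset.sum_const, ← Finset.mul_sum, ← hT, Finset.card_univ, Fintype.card_fin,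
      nsmul_eq_mul]
    ring
  have hmat : J * D * J = D - (n:ℝ)⁻¹ • (E * D) - (n:ℝ)⁻¹ • (D * E)
      + ((n:ℝ)⁻¹ * (n:ℝ)⁻¹) • (E * D * E) := by
    rw [hJ]
    simp only [sub_mul, mul_sub, Matrix.smul_mul, Matrix.mul_smul, one_mul, mul_one,
      smul_smul, smul_sub, Matrix.mul_assoc]
    abel
  have hED : ∀ i j, (E * D) i j = ∑ k, D k j := by
    intro i j; simp [Matrix.mul_apply, hE]
  have hDE : ∀ i j, (D * E) i j = ∑ k, D i k := by
    intro i j; simp [Matrix.mul_apply, hE]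
  have hEDE : ∀ i j, (E * D * E) i j = ∑ k, ∑ l, D l k := by
    intro i j
    simp only [Matrix.mul_apply, hE, Matrix.of_apply, mul_one]
    congr 1
    ext k
    simp [Matrix.mul_apply]
  intro i j
  have hRHS : (inner ℝ (x i - c) (x j - c) : ℝ)
      = g i j - (n:ℝ)⁻¹ * (inner ℝ (x i) s : ℝ) - (n:ℝ)⁻¹ * (inner ℝ s (x j) : ℝ)
        + (n:ℝ)⁻¹ * (n:ℝ)⁻¹ * (inner ℝ s s : ℝ) := by
    rw [hc]
    simp only [inner_sub_left, inner_sub_right, real_inner_smul_left, real_inner_smul_right, hg]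
    ring
  rw [Matrix.smul_apply, hmat]
  simp only [Matrix.sub_apply, Matrix.add_apply, Matrix.smul_apply, hED, hDE, hEDE,
    smul_eq_mul, hsum1 j, hsum2 i, hsum3, hD' i j, hRHS]
  field_simp
  ring
end

section
/- (Example 3.2, rigidity of the full instance.) Work in ℝ². Let x : Fin 5 → ℝ² satisfy: x 0 = (1,0), x 1 = (2,0), x 2 = (2,1), dist(x 0, x 1) = 1, dist(x 0, x 2) = √2, dist(x 0, x 4) = 1, dist(x 1, x 2) = 1, dist(x 1, x 3) = √5, dist(x 2, x 3) = 2, and dist(x 3, x 4) = 1. Then necessarily x 3 = (0,1) and x 4 ∈ {(0,0), (1,1)}. In particular, in any such realization the alternative trilateration position (4,1) for the fourth vertex never occurs. -/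
set_option maxHeartbeats 1000000

lemma dist_sq_two (p q : EuclideanSpace ℝ (Fin 2)) :
    dist p q ^ 2 = (p 0 - q 0) ^ 2 + (p 1 - q 1) ^ 2 := by
  rw [EuclideanSpace.dist_eq, Real.sq_sqrt (by positivity)]
  simp [Fin.sum_univ_two, Real.dist_eq, sq_abs]

/-- Example 3.2, rigidity of the full instance: any realization of the whole
graph with the first three vertices fixed at (1,0), (2,0), (2,1) must place
vertex 4 (index 3) at (0,1) and vertex 5 (index 4) at (0,0) or (1,1); the
alternative trilateration position (4,1) never occurs. -/
theorem full_instance_rigid (x : Fin 5 → EuclideanSpace ℝ (Fin 2))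
    (h0 : x 0 = !₂[1, 0]) (h1 : x 1 = !₂[2, 0]) (h2 : x 2 = !₂[2, 1])
    (h01 : dist (x 0) (x 1) = 1)
    (h02 : dist (x 0) (x 2) = Real.sqrt 2)
    (h04 : dist (x 0) (x 4) = 1)
    (h12 : dist (x 1) (x 2) = 1)
    (h13 : dist (x 1) (x 3) = Real.sqrt 5)
    (h23 : dist (x 2) (x 3) = 2)
    (h34 : dist (x 3) (x 4) = 1) :
    x 3 = !₂[0, 1] ∧ (x 4 = !₂[0, 0] ∨ x 4 = !₂[1, 1]) := by
  obtain ⟨a, ha⟩ : ∃ a : ℝ, x 3 0 = a := ⟨_, rfl⟩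
  obtain ⟨b, hb⟩ : ∃ b : ℝ, x 3 1 = b := ⟨_, rfl⟩
  obtain ⟨c, hc⟩ : ∃ c : ℝ, x 4 0 = c := ⟨_, rfl⟩
  obtain ⟨d, hd⟩ : ∃ d : ℝ, x 4 1 = d := ⟨_, rfl⟩
  have e13 : (2 - a) ^ 2 + (0 - b) ^ 2 = 5 := by
    have := dist_sq_two (x 1) (x 3)
    rw [h13, Real.sq_sqrt (by norm_num), h1, ha, hb] at this
    simpa using this.symm
  have e23 : (2 - a) ^ 2 + (1 - b) ^ 2 = 4 := by
    have := dist_sq_two (x 2) (x 3)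
    rw [h23, h2, ha, hb] at this
    norm_num at this
    simpa using this.symm
  have e04 : (1 - c) ^ 2 + (0 - d) ^ 2 = 1 := by
    have := dist_sq_two (x 0) (x 4)
    rw [h04, h0, hc, hd] at this
    simpa using this.symm
  have e34 : (a - c) ^ 2 + (b - d) ^ 2 = 1 := by
    have := dist_sq_two (x 3) (x 4)
    rw [h34, ha, hb, hc, hd] at this
    simpa using this.symm
  have hb1 : b = 1 := by nlinarith
  subst hb1
  have ha0 : a = 0 := by
    have haa : (a - 0) * (a - 4) = 0 := by nlinarith
    rcases mul_eq_zero.1 haa with h | h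
    · linarith
    · exfalso
      have h4 : a = 4 := by linarith
      rw [h4] at e34
      nlinarith [sq_nonneg (5 - 2 * c), sq_nonneg (2 * d - 1)]
  subst ha0
  have hcd : c = d := by linear_combination (e34 - e04) / 2
  subst hcd
  have hcc : c = 0 ∨ c = 1 := by
    have h : c * (c - 1) = 0 := by nlinarith
    rcases mul_eq_zero.1 h with h | h
    · exact Or.inl h
    · exact Or.inr (by linarith)
  refine ⟨PiLp.ext fun i => ?_, ?_⟩
  · fin_cases i
    · simpa using ha
    · simpa using hb
  · rcases hcc with h | h
    · left; apply PiLp.ext; intro i; fin_cases i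
      · simp [hc, h]
      · simp [hd, h]
    · right; apply PiLp.ext; intro i; fin_cases i
      · simp [hc, h]
      · simp [hd, h]
end
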